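/- arXiv:1706.07687 — 4 statements merged into one kernel-verified Lean document; each statement's English description precedes it below -/
import Mathlib

section
/- If K ⊆ ℝⁿ is a detour set, then K has empty interior. -/
open MeasureTheory Metric Set Filter
open scoped ENNReal NNReal Topology

/-- The line through the point `w` in the direction `v`. -/
def lineThrough {n : ℕ} (w v : EuclideanSpace ℝ (Fin n)) : Set (EuclideanSpace ℝ (Fin n)) :=
  {x | ∃ t : ℝ, x = w + t • v}

/-- The line `L` has the detour property with respect to the family `Ω` of complementary
components and the closed ball `B`: for every `ε > 0` there is a path `γ` whose trace lies
within Hausdorff distance `ε` of `L ∩ B`, such that (i) the trace of `γ` is contained in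
`⋃ k, closure (Ω k)`; (ii) `γ` meets only finitely many of the sets `closure (Ω k)`; and
(iii) every `closure (Ω k)` met by `γ` is also met by `L`. -/
def HasDetourProperty {n : ℕ} (Ω : ℕ → Set (EuclideanSpace ℝ (Fin n)))
    (B : Set (EuclideanSpace ℝ (Fin n))) (L : Set (EuclideanSpace ℝ (Fin n))) : Prop :=
  ∀ ε > (0 : ℝ), ∃ γ : ℝ → EuclideanSpace ℝ (Fin n), ContinuousOn γ (Icc 0 1) ∧
    hausdorffDist (γ '' Icc 0 1) (L ∩ B) ≤ ε ∧
    γ '' Icc 0 1 ⊆ ⋃ k, closure (Ω k) ∧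
    {k | (γ '' Icc 0 1 ∩ closure (Ω k)).Nonempty}.Finite ∧
    {k | (γ '' Icc 0 1 ∩ closure (Ω k)).Nonempty} ⊆ {k | (L ∩ closure (Ω k)).Nonempty}

/-- `K` is a detour set with complementary components `Ω 0, Ω 1, Ω 2, …`:
`K` is compact, `Ω` is an injective enumeration of the (infinitely many) connected components
of the complement of `K`, with `Ω 0` the unbounded component and `Ω k`, `k ≥ 1`, the bounded
ones, and there exist a closed ball `B` containing `K` in its interior and `n` linearly
independent directions such that, for each of these directions, almost every line parallel to
it (lines parallel to `v` being parametrized by the points of the orthogonal complement of `v`,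
equipped with its Lebesgue measure) has the detour property. -/
structure IsDetourSet (n : ℕ) (K : Set (EuclideanSpace ℝ (Fin n)))
    (Ω : ℕ → Set (EuclideanSpace ℝ (Fin n))) : Prop where
  compact : IsCompact K
  inj : Function.Injective Ω
  component : ∀ k, ∃ x ∈ Kᶜ, Ω k = connectedComponentIn Kᶜ x
  surj : ∀ x ∈ Kᶜ, ∃ k, Ω k = connectedComponentIn Kᶜ x
  unbounded : ¬ Bornology.IsBounded (Ω 0)
  bounded : ∀ k : ℕ, k ≠ 0 → Bornology.IsBounded (Ω k)
  detour : ∃ (x : EuclideanSpace ℝ (Fin n)) (r : ℝ), 0 < r ∧ K ⊆ ball x r ∧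
    ∃ v : Fin n → EuclideanSpace ℝ (Fin n), LinearIndependent ℝ v ∧
      ∀ i : Fin n, ∀ᵐ w : ↥(Submodule.span ℝ {v i})ᗮ,
        HasDetourProperty Ω (closedBall x r)
          (lineThrough (w : EuclideanSpace ℝ (Fin n)) (v i))

theorem statement0 {n : ℕ} (K : Set (EuclideanSpace ℝ (Fin n)))
    (Ω : ℕ → Set (EuclideanSpace ℝ (Fin n))) (hK : IsDetourSet n K Ω) :
    interior K = ∅ := by
  by_contra h
  obtain ⟨x, hx⟩ := Set.nonempty_iff_ne_empty.mpr h
  obtain ⟨δ, hδ, hball⟩ := Metric.isOpen_iff.mp isOpen_interior x hx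
  have hballK : ball x δ ⊆ K := hball.trans interior_subset
  rcases Nat.eq_zero_or_pos n with hn | hn
  · subst hn
    exact hK.unbounded ((Set.subsingleton_of_subsingleton (s := Ω 0)).finite.isBounded)
  obtain ⟨x₀, r₀, hr₀, hKB, v, hvLI, hdet⟩ := hK.detour
  set i0 : Fin n := ⟨0, hn⟩
  set vi := v i0 with hvi
  have hdet0 := hdet i0
  set V := (Submodule.span ℝ {vi})ᗮ with hV
  set w₀ : V := Submodule.orthogonalProjection V x with hw₀
  obtain ⟨t₀, ht₀⟩ := Submodule.mem_span_singleton.mp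
    (Submodule.orthogonalProjection (Submodule.span ℝ {vi}) x).2
  have hx_decomp : (Submodule.orthogonalProjection (Submodule.span ℝ {vi}) x : EuclideanSpace ℝ (Fin n))
      + (w₀ : EuclideanSpace ℝ (Fin n)) = x :=
    Submodule.starProjection_add_starProjection_orthogonal (K := Submodule.span ℝ {vi}) x
  -- find good w
  rw [ae_iff] at hdet0
  have hpos : 0 < volume (ball w₀ (δ/2)) := measure_ball_pos _ _ (by positivity)
  have hnsub : ¬ (ball w₀ (δ/2) ⊆
      {w : V | ¬ HasDetourProperty Ω (closedBall x₀ r₀) (lineThrough (w : EuclideanSpace ℝ (Fin n)) vi)}) := by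
    intro hsub
    exact absurd (le_antisymm (le_trans (measure_mono hsub) hdet0.le) zero_le) hpos.ne'
  obtain ⟨w, hwball, hw⟩ := Set.not_subset.mp hnsub
  rw [Set.mem_setOf_eq, not_not] at hw
  set y : EuclideanSpace ℝ (Fin n) := (w : EuclideanSpace ℝ (Fin n)) + t₀ • vi with hy
  have hdyx : dist y x < δ / 2 := by
    have : y - x = (w : EuclideanSpace ℝ (Fin n)) - (w₀ : EuclideanSpace ℝ (Fin n)) := by
      rw [← hx_decomp, ← ht₀, hy]; abel
    rw [dist_eq_norm, this, ← dist_eq_norm, ← Subtype.dist_eq]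
    exact mem_ball.mp hwball
  have hyball : ball y (δ/2) ⊆ K := fun z hz => hballK (by
    rw [mem_ball] at *
    calc dist z x ≤ dist z y + dist y x := dist_triangle _ _ _
      _ < δ/2 + δ/2 := add_lt_add hz hdyx
      _ = δ := by ring)
  have hyL : y ∈ lineThrough (w : EuclideanSpace ℝ (Fin n)) vi := ⟨t₀, rfl⟩
  have hyB : y ∈ closedBall x₀ r₀ :=
    ball_subset_closedBall (hKB (hyball (mem_ball_self (by positivity))))
  obtain ⟨γ, hγcont, hγd, hγsub, -, -⟩ := hw (δ/8) (by positivity)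
  have himne : (γ '' Icc 0 1).Nonempty := ⟨γ 0, mem_image_of_mem _ (by constructor <;> norm_num)⟩
  have hLBne : (lineThrough (w : EuclideanSpace ℝ (Fin n)) vi ∩ closedBall x₀ r₀).Nonempty :=
    ⟨y, hyL, hyB⟩
  have hfin := hausdorffEdist_ne_top_of_nonempty_of_bounded himne hLBne
      (isCompact_Icc.image_of_continuousOn hγcont).isBounded
      (isBounded_closedBall.subset inter_subset_right)
  obtain ⟨z, hzim, hzy⟩ := exists_dist_lt_of_hausdorffDist_lt' (r := δ/4) (Set.mem_inter hyL hyB)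
    (lt_of_le_of_lt hγd (by linarith)) hfin
  -- z ∈ interior K
  have hzint : z ∈ interior K := by
    have : ball z (δ/4) ⊆ K := fun u hu => hyball (by
      rw [mem_ball] at *
      calc dist u y ≤ dist u z + dist z y := dist_triangle _ _ _
        _ < δ/4 + δ/4 := add_lt_add hu hzy
        _ = δ/2 := by ring)
    exact mem_interior.mpr ⟨ball z (δ/4), this, isOpen_ball, mem_ball_self (by positivity)⟩
  -- z ∈ closure Kᶜ
  obtain ⟨s, ⟨k, rfl⟩, hzs⟩ := hγsub hzim
  obtain ⟨p, hp, hΩk⟩ := hK.component k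
  have hzKc : z ∈ closure Kᶜ := by
    refine closure_mono ?_ hzs
    rw [hΩk]; exact connectedComponentIn_subset _ _
  rw [closure_compl] at hzKc
  exact hzKc hzint
end

section
/- Let K ⊆ ℝ² be a detour set whose complementary components are Jordan regions when regarded as subsets of the Riemann sphere (i.e., each bounded component Ω_k, k ≥ 1, is a Jordan region, and the unbounded component Ω₀ is an unbounded Jordan region). Then K is connected. -/
open MeasureTheory Metric Set Filter
open scoped ENNReal NNReal Topology

/-- A Jordan curve in the plane: the homeomorphic (equivalently, continuous injective) image
of a circle. -/
def IsJordanCurve (J : Set (EuclideanSpace ℝ (Fin 2))) : Prop :=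
  ∃ f : Metric.sphere (0 : EuclideanSpace ℝ (Fin 2)) 1 → EuclideanSpace ℝ (Fin 2),
    Continuous f ∧ Function.Injective f ∧ Set.range f = J

/-- A Jordan region: an open subset of the plane whose boundary is a Jordan curve. -/
def IsJordanRegion (Ω : Set (EuclideanSpace ℝ (Fin 2))) : Prop :=
  IsOpen Ω ∧ IsJordanCurve (frontier Ω)

/-- An unbounded Jordan region: `∂Ω` is a Jordan curve and `Ω` is the unbounded connected
component of the complement of `∂Ω`. -/
def IsUnboundedJordanRegion (Ω : Set (EuclideanSpace ℝ (Fin 2))) : Prop :=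
  IsJordanCurve (frontier Ω) ∧ ¬ Bornology.IsBounded Ω ∧
    ∃ x ∈ Ω, Ω = connectedComponentIn (frontier Ω)ᶜ x

lemma clopen_ball {X : Type*} [NormedAddCommGroup X] [NormedSpace ℝ X] {Ω : Set X}
    (hΩ : IsOpen Ω) {c y : X} {s : ℝ}
    (hyΩ : y ∈ Ω) (hyb : y ∈ ball c s) (hc : c ∉ Ω)
    (hfr : frontier Ω ∩ ball c s = ∅) : False := by
  have hs : 0 < s := lt_of_le_of_lt dist_nonneg hyb
  have hfr' : ∀ q ∈ ball c s, q ∉ Ω → q ∉ closure Ω := by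
    intro q hqb hqΩ hqc
    have : q ∈ frontier Ω := by
      rw [hΩ.frontier_eq]; exact ⟨hqc, hqΩ⟩
    exact Set.eq_empty_iff_forall_notMem.mp hfr q ⟨this, hqb⟩
  have hconn := (convex_ball c s).isPreconnected
  have hsub : ball c s ⊆ Ω ∪ (closure Ω)ᶜ := by
    intro q hq
    by_cases hqΩ : q ∈ Ω
    · exact Or.inl hqΩ
    · exact Or.inr (hfr' q hq hqΩ)
  obtain ⟨q, _, hqΩ, hqc⟩ := hconn Ω (closure Ω)ᶜ hΩ isClosed_closure.isOpen_compl hsub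
    ⟨y, hyb, hyΩ⟩ ⟨c, mem_ball_self hs, hfr' c (mem_ball_self hs) hc⟩
  exact hqc (subset_closure hqΩ)

lemma frontier_connectedComponentIn {X : Type*} [NormedAddCommGroup X] [NormedSpace ℝ X]
    {F : Set X} (hF : IsOpen F) (x : X) :
    ∀ y ∈ frontier (connectedComponentIn F x), y ∉ F := by
  intro y hy hyF
  set C := connectedComponentIn F x with hC
  have hopen : IsOpen (connectedComponentIn F y) := hF.connectedComponentIn
  have hmem : y ∈ connectedComponentIn F y := mem_connectedComponentIn hyF
  have hclC : y ∈ closure C := hy.1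
  obtain ⟨u, huy, huC⟩ := mem_closure_iff.mp hclC _ hopen hmem
  have h1 : connectedComponentIn F y = connectedComponentIn F u := connectedComponentIn_eq huy
  have h2 : connectedComponentIn F x = connectedComponentIn F u := connectedComponentIn_eq huC
  have : y ∈ C := by rw [hC, h2, ← h1]; exact hmem
  have hCopen : IsOpen C := hF.connectedComponentIn
  rw [hCopen.frontier_eq] at hy
  exact hy.2 this

lemma jordan_nonempty_preconnected {J : Set (EuclideanSpace ℝ (Fin 2))}
    (h : IsJordanCurve J) : J.Nonempty ∧ IsPreconnected J := by
  obtain ⟨f, hf, -, hrange⟩ := h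
  have hrank : 1 < Module.rank ℝ (EuclideanSpace ℝ (Fin 2)) := by
    apply Module.one_lt_rank_of_one_lt_finrank
    rw [finrank_euclideanSpace_fin]
    exact one_lt_two
  have hsph : IsConnected (sphere (0 : EuclideanSpace ℝ (Fin 2)) 1) :=
    isConnected_sphere hrank 0 zero_le_one
  haveI : ConnectedSpace (sphere (0 : EuclideanSpace ℝ (Fin 2)) 1) :=
    Subtype.connectedSpace hsph
  have : IsConnected (Set.range f) := isConnected_range hf
  rw [hrange] at this
  exact ⟨this.nonempty, this.isPreconnected⟩

lemma exists_line_near {n : ℕ} (v p : EuclideanSpace ℝ (Fin n))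
    (P : ↥(Submodule.span ℝ {v})ᗮ → Prop) (hae : ∀ᵐ w, P w) {σ : ℝ} (hσ : 0 < σ) :
    ∃ (w : ↥(Submodule.span ℝ {v})ᗮ) (t : ℝ), P w ∧
      dist ((w : EuclideanSpace ℝ (Fin n)) + t • v) p < σ := by
  have hdec : ↑((Submodule.orthogonalProjection (Submodule.span ℝ {v})ᗮ) p)
      + ↑((Submodule.orthogonalProjection (Submodule.span ℝ {v})ᗮᗮ) p) = p :=
    Submodule.starProjection_add_starProjection_orthogonal (K := (Submodule.span ℝ {v})ᗮ) p
  have hmem : (↑((Submodule.orthogonalProjection (Submodule.span ℝ {v})ᗮᗮ) p) :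
      EuclideanSpace ℝ (Fin n)) ∈ (Submodule.span ℝ {v})ᗮᗮ := Submodule.coe_mem _
  have hmem2 : (↑((Submodule.orthogonalProjection (Submodule.span ℝ {v})ᗮᗮ) p) :
      EuclideanSpace ℝ (Fin n)) ∈ Submodule.span ℝ {v} :=
    (le_of_eq (Submodule.orthogonal_orthogonal (Submodule.span ℝ {v}))) hmem
  obtain ⟨t, ht⟩ := Submodule.mem_span_singleton.mp hmem2
  set w₀ : ↥(Submodule.span ℝ {v})ᗮ := Submodule.orthogonalProjection (Submodule.span ℝ {v})ᗮ p with hw₀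
  have hball : 0 < volume (ball w₀ σ) := measure_ball_pos _ _ hσ
  have hex : ∃ w ∈ ball w₀ σ, P w := by
    by_contra hcon
    push_neg at hcon
    have hsub : ball w₀ σ ⊆ {w | ¬ P w} := fun w hw => hcon w hw
    have h0 : volume (ball w₀ σ) = 0 := measure_mono_null hsub (ae_iff.mp hae)
    simp [h0] at hball
  obtain ⟨w, hwb, hwP⟩ := hex
  refine ⟨w, t, hwP, ?_⟩
  have heq : (w : EuclideanSpace ℝ (Fin n)) + t • v - p = ↑w - ↑w₀ := by
    rw [← hdec, ht, hw₀]
    abel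
  rw [dist_eq_norm, heq]
  have hnorm : ‖(w : EuclideanSpace ℝ (Fin n)) - ↑w₀‖ = dist w w₀ := by
    rw [dist_eq_norm, ← Submodule.coe_sub]
    rfl
  rw [hnorm]
  exact hwb

lemma mem_component_of_close {K : Set (EuclideanSpace ℝ (Fin 2))}
    {q y : EuclideanSpace ℝ (Fin 2)} (h : dist q y < infDist q K) :
    y ∈ connectedComponentIn Kᶜ q := by
  have hq : q ∉ K := by
    intro hq
    have : infDist q K ≤ dist q q := infDist_le_dist_of_mem hq
    simp at this
    have := dist_nonneg (x := q) (y := y)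
    linarith
  have hsub : segment ℝ q y ⊆ Kᶜ := by
    intro a ha
    have h1 : a ∈ closedBall q (dist q y) := by
      apply (convex_closedBall q (dist q y)).segment_subset _ _ ha
      · simpa using dist_nonneg
      · simp [mem_closedBall, dist_comm]
    intro haK
    have : infDist q K ≤ dist q a := infDist_le_dist_of_mem haK
    rw [mem_closedBall, dist_comm] at h1
    linarith
  have := (convex_segment q y).isPreconnected.subset_connectedComponentIn
    (left_mem_segment ℝ q y) hsub
  exact this (right_mem_segment ℝ q y)

lemma detour_aux (K : Set (EuclideanSpace ℝ (Fin 2)))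
    (Ω : ℕ → Set (EuclideanSpace ℝ (Fin 2))) (hK : IsDetourSet 2 K Ω)
    (hfr : ∀ k, (frontier (Ω k)).Nonempty ∧ IsPreconnected (frontier (Ω k)))
    (F₁ F₂ : Set (EuclideanSpace ℝ (Fin 2)))
    (h₁c : IsCompact F₁) (h₂c : IsCompact F₂)
    (h₁ne : F₁.Nonempty) (h₂ne : F₂.Nonempty) (hdisj : Disjoint F₁ F₂)
    (hunion : K = F₁ ∪ F₂) (hfr0 : frontier (Ω 0) ⊆ F₁) : False := by
  have hKcl : IsClosed K := hK.compact.isClosed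
  have hKc : IsOpen Kᶜ := hKcl.isOpen_compl
  -- basic facts about the components
  have hΩopen : ∀ k, IsOpen (Ω k) := by
    intro k
    obtain ⟨x, -, hxe⟩ := hK.component k
    rw [hxe]
    exact hKc.connectedComponentIn
  have hΩsub : ∀ k, Ω k ⊆ Kᶜ := by
    intro k
    obtain ⟨x, -, hxe⟩ := hK.component k
    rw [hxe]
    exact connectedComponentIn_subset _ _
  have hfrK : ∀ k, frontier (Ω k) ⊆ K := by
    intro k y hy
    obtain ⟨x, -, hxe⟩ := hK.component k
    rw [hxe] at hy
    by_contra hyK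
    exact frontier_connectedComponentIn hKc x y hy hyK
  have hclosure : ∀ k, closure (Ω k) = Ω k ∪ frontier (Ω k) := by
    intro k
    rw [(hΩopen k).frontier_eq, union_diff_cancel' (le_refl _) subset_closure]
  -- distance between the two pieces
  have hcont : ContinuousOn (fun a => infDist a F₂) F₁ := (continuous_infDist_pt F₂).continuousOn
  obtain ⟨a₀, ha₀, hmin⟩ := h₁c.exists_isMinOn h₁ne hcont
  set d := infDist a₀ F₂ with hd_def
  have hd : 0 < d := by
    rw [hd_def, ← h₂c.isClosed.notMem_iff_infDist_pos h₂ne]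
    exact fun ha => Set.disjoint_left.mp hdisj ha₀ ha
  have hdist : ∀ a ∈ F₁, ∀ b ∈ F₂, d ≤ dist a b := by
    intro a ha b hb
    exact le_trans (hmin ha) (infDist_le_dist_of_mem hb)
  -- classification of frontiers
  obtain ⟨U, V, hUo, hVo, hF₁U, hF₂V, hUV⟩ := normal_separation h₁c.isClosed h₂c.isClosed hdisj
  have hclass : ∀ k, frontier (Ω k) ⊆ F₁ ∨ frontier (Ω k) ⊆ F₂ := by
    intro k
    have hsubK : frontier (Ω k) ⊆ K := hfrK k
    have hsubUV : frontier (Ω k) ⊆ U ∪ V := by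
      intro y hy
      rcases (hunion ▸ hsubK hy) with h | h
      · exact Or.inl (hF₁U h)
      · exact Or.inr (hF₂V h)
    by_cases hcase : (frontier (Ω k) ∩ U).Nonempty
    · left
      have hU : frontier (Ω k) ⊆ U :=
        IsPreconnected.subset_left_of_subset_union hUo hVo hUV hsubUV hcase (hfr k).2
      intro y hy
      rcases (hunion ▸ hsubK hy) with h | h
      · exact h
      · exact absurd (hF₂V h) (fun hv => Set.disjoint_left.mp hUV (hU hy) hv)
    · right
      intro y hy
      have hyV : y ∈ V := by
        rcases hsubUV hy with h | h
        · exact absurd ⟨y, hy, h⟩ hcase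
        · exact h
      rcases (hunion ▸ hsubK hy) with h | h
      · exact absurd (hF₁U h) (fun hu => Set.disjoint_left.mp hUV hu hyV)
      · exact h
  -- the detour data
  obtain ⟨x, r, hr, hKball, v, hvli, hae⟩ := hK.detour
  set v₀ := v 0 with hv₀def
  have hv₀ : v₀ ≠ 0 := hvli.ne_zero 0
  have hnv₀ : 0 < ‖v₀‖ := norm_pos_iff.mpr hv₀
  obtain ⟨p, hp⟩ := h₂ne
  have hpK : p ∈ K := hunion ▸ Or.inr hp
  have hpball : dist p x < r := hKball hpK
  set σ := min (d / 8) ((r - dist p x) / 2) with hσdef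
  have hσ : 0 < σ := lt_min (by linarith) (by linarith)
  obtain ⟨w, tz, hw_detour, hz_near⟩ := exists_line_near v₀ p _ (hae 0) hσ
  set z := (w : EuclideanSpace ℝ (Fin 2)) + tz • v₀ with hzdef
  have hzB : z ∈ closedBall x r := by
    have h1 : dist z x ≤ dist z p + dist p x := dist_triangle _ _ _
    have h2 : σ ≤ (r - dist p x) / 2 := min_le_right _ _
    rw [mem_closedBall]
    linarith [hz_near]
  have hσd : σ ≤ d / 8 := min_le_left _ _
  -- the endpoint e on the sphere
  set T := {t : ℝ | (w : EuclideanSpace ℝ (Fin 2)) + t • v₀ ∈ closedBall x r} with hTdef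
  have hTne : tz ∈ T := hzB
  have hTclosed : IsClosed T := by
    have hcont2 : Continuous fun t : ℝ => (w : EuclideanSpace ℝ (Fin 2)) + t • v₀ :=
      continuous_const.add (continuous_id.smul continuous_const)
    exact IsClosed.preimage hcont2 Metric.isClosed_closedBall
  have hTbdd : BddAbove T := by
    refine ⟨(r + ‖(w : EuclideanSpace ℝ (Fin 2)) - x‖) / ‖v₀‖, fun t ht => ?_⟩
    have h1 : ‖(w : EuclideanSpace ℝ (Fin 2)) + t • v₀ - x‖ ≤ r := by
      rw [← dist_eq_norm]
      exact mem_closedBall.mp ht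
    have h2 : ‖t • v₀‖ ≤ r + ‖(w : EuclideanSpace ℝ (Fin 2)) - x‖ := by
      have : t • v₀ = ((w : EuclideanSpace ℝ (Fin 2)) + t • v₀ - x)
          - ((w : EuclideanSpace ℝ (Fin 2)) - x) := by abel
      rw [this]
      exact le_trans (norm_sub_le _ _) (by linarith)
    rw [norm_smul, Real.norm_eq_abs] at h2
    rw [le_div_iff₀ hnv₀]
    calc t * ‖v₀‖ ≤ |t| * ‖v₀‖ := by
          apply mul_le_mul_of_nonneg_right (le_abs_self t) (le_of_lt hnv₀)
      _ ≤ r + ‖(w : EuclideanSpace ℝ (Fin 2)) - x‖ := h2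
  set tstar := sSup T with htstar
  have htT : tstar ∈ T := hTclosed.csSup_mem ⟨tz, hTne⟩ hTbdd
  set e := (w : EuclideanSpace ℝ (Fin 2)) + tstar • v₀ with hedef
  have he_ball : e ∈ closedBall x r := htT
  have he_r : dist e x = r := by
    by_contra hne
    have hlt : dist e x < r := lt_of_le_of_ne (mem_closedBall.mp he_ball) hne
    set ρ := r - dist e x with hρdef
    have hρ : 0 < ρ := by linarith
    set t' := tstar + ρ / (2 * ‖v₀‖) with ht'def
    have ht'T : t' ∈ T := by
      have hdist1 : dist ((w : EuclideanSpace ℝ (Fin 2)) + t' • v₀) e = ρ / 2 := by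
        rw [dist_eq_norm]
        have : (w : EuclideanSpace ℝ (Fin 2)) + t' • v₀ - e = (ρ / (2 * ‖v₀‖)) • v₀ := by
          rw [hedef, ht'def, add_smul]
          abel
        rw [this, norm_smul, Real.norm_eq_abs, abs_of_pos (by positivity)]
        field_simp
      have : dist ((w : EuclideanSpace ℝ (Fin 2)) + t' • v₀) x ≤ ρ / 2 + dist e x :=
        le_trans (dist_triangle _ e x) (by linarith [hdist1])
      rw [hTdef, mem_setOf_eq, mem_closedBall]
      linarith
    have hle : t' ≤ tstar := le_csSup hTbdd ht'T
    have hpos : 0 < ρ / (2 * ‖v₀‖) := by positivity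
    rw [ht'def] at hle
    linarith
  have he_not : e ∉ K := by
    intro h
    have := mem_ball.mp (hKball h)
    rw [he_r] at this
    exact lt_irrefl r this
  have he_c : e ∈ Kᶜ := he_not
  -- e lies in the unbounded component Ω 0
  have hΩ0e : Ω 0 = connectedComponentIn Kᶜ e := by
    obtain ⟨k0, hk0⟩ := hK.surj e he_c
    have hk00 : k0 = 0 := by
      by_contra hk0ne
      have hb := hK.bounded k0 hk0ne
      rw [hk0] at hb
      set ray := (fun t : ℝ => x + t • (e - x)) '' Ici 1 with hraydef
      have hraydist : ∀ t : ℝ, 1 ≤ t → dist (x + t • (e - x)) x = t * r := by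
        intro t ht
        rw [dist_eq_norm]
        have : x + t • (e - x) - x = t • (e - x) := by abel
        rw [this, norm_smul, Real.norm_eq_abs, abs_of_nonneg (by linarith)]
        rw [← dist_eq_norm, he_r]
      have hraysub : ray ⊆ Kᶜ := by
        rintro _ ⟨t, ht, rfl⟩ hmem
        have ht1 : (1:ℝ) ≤ t := ht
        have h1 := mem_ball.mp (hKball hmem)
        rw [hraydist t ht1] at h1
        nlinarith
      have hray_comp : ray ⊆ connectedComponentIn Kᶜ e := by
        have hconnray : IsPreconnected ray := isPreconnected_Ici.image _
          (Continuous.continuousOn (continuous_const.add (continuous_id.smul continuous_const)))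
        have heray : e ∈ ray := ⟨1, mem_Ici.mpr (le_refl 1), by simp⟩
        exact hconnray.subset_connectedComponentIn heray hraysub
      obtain ⟨R, hR⟩ := (hb.subset hray_comp).subset_closedBall x
      set t := (max R 0 + r) / r with htdef
      have ht1 : 1 ≤ t := by
        rw [htdef, le_div_iff₀ hr]
        have := le_max_right R 0
        linarith
      have hmem : x + t • (e - x) ∈ ray := ⟨t, ht1, rfl⟩
      have := mem_closedBall.mp (hR hmem)
      rw [hraydist t ht1] at this
      have htr : t * r = max R 0 + r := by
        rw [htdef]
        field_simp
      rw [htr] at this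
      have := le_max_left R 0
      linarith
    rw [← hk00]
    exact hk0
  have he0 : e ∈ Ω 0 := by
    rw [hΩ0e]
    exact mem_connectedComponentIn he_c
  set ηe := infDist e K with hηedef
  have hηe : 0 < ηe := by
    rw [hηedef, ← hKcl.notMem_iff_infDist_pos ⟨p, hpK⟩]
    exact he_not
  -- choose ε
  classical
  set εz := if z ∈ K then (1 : ℝ) else infDist z K with hεzdef
  have hεz : 0 < εz := by
    rw [hεzdef]
    split_ifs with hzK
    · exact one_pos
    · rw [← hKcl.notMem_iff_infDist_pos ⟨p, hpK⟩]
      exact hzK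
  set ε := min (min (d / 8) (ηe / 2)) (εz / 2) with hεdef
  have hε : 0 < ε := lt_min (lt_min (by linarith) (by linarith)) (by linarith)
  have hεd : ε ≤ d / 8 := le_trans (min_le_left _ _) (min_le_left _ _)
  have hεη : ε ≤ ηe / 2 := le_trans (min_le_left _ _) (min_le_right _ _)
  have hεεz : ε ≤ εz / 2 := min_le_right _ _
  -- get the detour path
  obtain ⟨γ, hγc, hγd, hγsub, hγfin, -⟩ := hw_detour ε hε
  set Γ := γ '' Icc 0 1 with hΓdef
  have hΓcompact : IsCompact Γ := isCompact_Icc.image_of_continuousOn hγc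
  have hΓne : Γ.Nonempty := ⟨γ 0, ⟨0, ⟨le_refl 0, zero_le_one⟩, rfl⟩⟩
  have hΓconn : IsPreconnected Γ := isPreconnected_Icc.image γ hγc
  set LB := lineThrough (w : EuclideanSpace ℝ (Fin 2)) v₀ ∩ closedBall x r with hLBdef
  have hzLB : z ∈ LB := ⟨⟨tz, rfl⟩, hzB⟩
  have heLB : e ∈ LB := ⟨⟨tstar, rfl⟩, he_ball⟩
  have hfinHD : EMetric.hausdorffEdist Γ LB ≠ ⊤ :=
    hausdorffEdist_ne_top_of_nonempty_of_bounded hΓne ⟨z, hzLB⟩ hΓcompact.isBounded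
      (isBounded_closedBall.subset inter_subset_right)
  have hΓLB : ∀ q ∈ LB, ∃ y ∈ Γ, dist q y ≤ ε := by
    intro q hq
    have h1 : infDist q Γ ≤ hausdorffDist LB Γ := by
      apply infDist_le_hausdorffDist_of_mem hq
      rw [EMetric.hausdorffEdist_comm]
      exact hfinHD
    rw [hausdorffDist_comm] at h1
    obtain ⟨y, hyΓ, hyd⟩ := hΓcompact.exists_infDist_eq_dist hΓne q
    exact ⟨y, hyΓ, by rw [← hyd]; exact le_trans h1 hγd⟩
  -- y_e close to e lies in Ω 0
  obtain ⟨ye, hyeΓ, hyed⟩ := hΓLB e heLB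
  have hye0 : ye ∈ Ω 0 := by
    rw [hΩ0e]
    exact mem_component_of_close (by rw [← hηedef]; linarith)
  -- the finitely many components met by γ, classified
  set S := {k | (Γ ∩ closure (Ω k)).Nonempty} with hSdef
  set S₁ := {k | k ∈ S ∧ frontier (Ω k) ⊆ F₁} with hS₁def
  set S₂ := {k | k ∈ S ∧ ¬ frontier (Ω k) ⊆ F₁} with hS₂def
  have hS₂F₂ : ∀ k ∈ S₂, frontier (Ω k) ⊆ F₂ := by
    intro k hk
    rcases hclass k with h | h
    · exact absurd h hk.2
    · exact h
  set C₁ := ⋃ k ∈ S₁, closure (Ω k) with hC₁def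
  set C₂ := ⋃ k ∈ S₂, closure (Ω k) with hC₂def
  have hC₁closed : IsClosed C₁ :=
    (hγfin.subset (fun k hk => hk.1)).isClosed_biUnion (fun k _ => isClosed_closure)
  have hC₂closed : IsClosed C₂ :=
    (hγfin.subset (fun k hk => hk.1)).isClosed_biUnion (fun k _ => isClosed_closure)
  -- disjointness of the two unions
  have hsame : ∀ k l : ℕ, ∀ y, y ∈ Kᶜ → y ∈ Ω k → y ∈ Ω l → Ω k = Ω l := by
    intro k l y hyc hyk hyl
    obtain ⟨xk, -, hxk⟩ := hK.component k
    obtain ⟨xl, -, hxl⟩ := hK.component l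
    rw [hxk] at hyk ⊢
    rw [hxl] at hyl ⊢
    rw [connectedComponentIn_eq hyk, connectedComponentIn_eq hyl]
  have hC₁C₂ : Disjoint C₁ C₂ := by
    rw [Set.disjoint_left]
    intro y hy1 hy2
    simp only [hC₁def, hC₂def, mem_iUnion, exists_prop] at hy1 hy2
    obtain ⟨k, hkS₁, hyk⟩ := hy1
    obtain ⟨l, hlS₂, hyl⟩ := hy2
    rw [hclosure k] at hyk
    rw [hclosure l] at hyl
    rcases hyk with hyk | hyk
    · have hyc : y ∈ Kᶜ := hΩsub k hyk
      rcases hyl with hyl | hyl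
      · have heq : Ω k = Ω l := hsame k l y hyc hyk hyl
        obtain ⟨q, hq⟩ := (hfr k).1
        have hq1 : q ∈ F₁ := hkS₁.2 hq
        have hq2 : q ∈ F₂ := hS₂F₂ l hlS₂ (heq ▸ hq)
        exact Set.disjoint_left.mp hdisj hq1 hq2
      · exact hyc (hfrK l hyl)
    · rcases hyl with hyl | hyl
      · exact (hΩsub l hyl) (hfrK k hyk)
      · exact Set.disjoint_left.mp hdisj (hkS₁.2 hyk) (hS₂F₂ l hlS₂ hyl)
  -- Γ is contained in C₁ ∪ C₂ and meets C₁, so is contained in a neighborhood of C₁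
  have hΓC : Γ ⊆ C₁ ∪ C₂ := by
    intro q hq
    obtain ⟨k, hk⟩ := mem_iUnion.mp (hγsub hq)
    have hkS : k ∈ S := ⟨q, hq, hk⟩
    by_cases hcase : frontier (Ω k) ⊆ F₁
    · exact Or.inl (mem_biUnion ⟨hkS, hcase⟩ hk)
    · exact Or.inr (mem_biUnion ⟨hkS, hcase⟩ hk)
  have h0S : (0 : ℕ) ∈ S := ⟨ye, hyeΓ, subset_closure hye0⟩
  have hyeC₁ : ye ∈ C₁ := mem_biUnion ⟨h0S, hfr0⟩ (subset_closure hye0)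
  obtain ⟨u, v', huo, hv'o, hC₁u, hC₂v', huv'⟩ :=
    normal_separation hC₁closed hC₂closed hC₁C₂
  have hΓu : Γ ⊆ u := by
    apply IsPreconnected.subset_left_of_subset_union huo hv'o huv' _ _ hΓconn
    · intro q hq
      rcases hΓC hq with h | h
      · exact Or.inl (hC₁u h)
      · exact Or.inr (hC₂v' h)
    · exact ⟨ye, hyeΓ, hC₁u hyeC₁⟩
  -- the point y_z close to z gives the contradiction
  obtain ⟨yz, hyzΓ, hyzd⟩ := hΓLB z hzLB
  by_cases hzK : z ∈ K
  · -- z ∈ F₂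
    have hzF₂ : z ∈ F₂ := by
      rcases (hunion ▸ hzK) with h | h
      · have := hdist z h p hp
        linarith [hz_near, hσd, hd]
      · exact h
    obtain ⟨k, hk⟩ := mem_iUnion.mp (hγsub hyzΓ)
    have hkS : k ∈ S := ⟨yz, hyzΓ, hk⟩
    have hkS₁ : frontier (Ω k) ⊆ F₁ := by
      by_contra hcase
      have : yz ∈ C₂ := mem_biUnion ⟨hkS, hcase⟩ hk
      exact Set.disjoint_left.mp huv' (hΓu hyzΓ) (hC₂v' this)
    have hyzΩ : yz ∈ Ω k := by
      rw [hclosure k] at hk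
      rcases hk with h | h
      · exact h
      · have h1 : yz ∈ F₁ := hkS₁ h
        have h2 := hdist yz h1 z hzF₂
        rw [dist_comm yz z] at h2
        linarith [hεd, hd, hyzd]
    apply clopen_ball (hΩopen k) hyzΩ (c := z) (s := d / 2)
    · rw [mem_ball, dist_comm]
      linarith [hyzd, hεd, hd]
    · exact fun h => (hΩsub k h) hzK
    · rw [Set.eq_empty_iff_forall_notMem]
      rintro q ⟨hq1, hq2⟩
      have := hdist q (hkS₁ hq1) z hzF₂
      rw [mem_ball] at hq2
      linarith
  · -- z ∉ K
    have hzc : z ∈ Kᶜ := hzK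
    obtain ⟨j, hj⟩ := hK.surj z hzc
    have hzj : z ∈ Ω j := by
      rw [hj]
      exact mem_connectedComponentIn hzc
    -- frontier of Ω j lies in F₂
    have hfrj : frontier (Ω j) ⊆ F₂ := by
      have hne : (frontier (Ω j) ∩ ball p (d / 2)).Nonempty := by
        by_contra hcon
        rw [not_nonempty_iff_eq_empty] at hcon
        apply clopen_ball (hΩopen j) hzj (c := p) (s := d / 2) _ _ hcon
        · rw [mem_ball]
          linarith [hz_near, hσd, hd]
        · exact fun h => (hΩsub j h) hpK
      obtain ⟨q, hqfr, hqb⟩ := hne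
      have hqK : q ∈ K := hfrK j hqfr
      have hqF₂ : q ∈ F₂ := by
        rcases (hunion ▸ hqK) with h | h
        · have := hdist q h p hp
          rw [mem_ball] at hqb
          linarith
        · exact h
      rcases hclass j with h | h
      · exact absurd hqF₂ (fun hf => Set.disjoint_left.mp hdisj (h hqfr) hf)
      · exact h
    have hεzK : εz = infDist z K := by rw [hεzdef, if_neg hzK]
    have hyzj : yz ∈ Ω j := by
      rw [hj]
      apply mem_component_of_close
      rw [← hεzK]
      linarith [hyzd, hεεz, hεz]
    have hjS : j ∈ S := ⟨yz, hyzΓ, subset_closure hyzj⟩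
    have hjS₂ : j ∈ S₂ := by
      refine ⟨hjS, fun hcon => ?_⟩
      obtain ⟨q, hq⟩ := (hfr j).1
      exact Set.disjoint_left.mp hdisj (hcon hq) (hfrj hq)
    have : yz ∈ C₂ := mem_biUnion hjS₂ (subset_closure hyzj)
    exact Set.disjoint_left.mp huv' (hΓu hyzΓ) (hC₂v' this)

lemma statement1_aux (K : Set (EuclideanSpace ℝ (Fin 2)))
    (Ω : ℕ → Set (EuclideanSpace ℝ (Fin 2))) (hK : IsDetourSet 2 K Ω)
    (h0 : IsJordanCurve (frontier (Ω 0)))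
    (hk : ∀ k : ℕ, k ≠ 0 → IsJordanCurve (frontier (Ω k))) :
    IsConnected K := by
  have hfrALL : ∀ k, (frontier (Ω k)).Nonempty ∧ IsPreconnected (frontier (Ω k)) := by
    intro k
    by_cases hk0 : k = 0
    · rw [hk0]
      exact jordan_nonempty_preconnected h0
    · exact jordan_nonempty_preconnected (hk k hk0)
  constructor
  · -- K is nonempty
    by_contra hne
    rw [Set.not_nonempty_iff_eq_empty] at hne
    have h01 : Ω 0 = Ω 1 := by
      obtain ⟨x0, -, he0⟩ := hK.component 0
      obtain ⟨x1, -, he1⟩ := hK.component 1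
      rw [he0, he1, hne, compl_empty, connectedComponentIn_univ,
        connectedComponentIn_univ, PreconnectedSpace.connectedComponent_eq_univ, PreconnectedSpace.connectedComponent_eq_univ]
    exact absurd (hK.inj h01) (by norm_num)
  · -- K is preconnected
    by_contra hpc
    unfold IsPreconnected at hpc
    push_neg at hpc
    obtain ⟨u, v, hu, hv, hcov, ⟨y1, hy1⟩, ⟨y2, hy2⟩, hempty⟩ := hpc
    set F₁ := K \ v with hF₁def
    set F₂ := K \ u with hF₂def
    have hdisj : Disjoint F₁ F₂ := by
      rw [Set.disjoint_left]
      rintro a ⟨haK, hav⟩ ⟨-, hau⟩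
      rcases hcov haK with h | h
      · exact hau h
      · exact hav h
    have hunion : K = F₁ ∪ F₂ := by
      ext a
      constructor
      · intro haK
        by_cases hau : a ∈ u
        · left
          refine ⟨haK, fun hav => ?_⟩
          have : a ∈ K ∩ (u ∩ v) := ⟨haK, hau, hav⟩
          rw [hempty] at this
          exact this
        · right
          refine ⟨haK, hau⟩
      · rintro (⟨h, -⟩ | ⟨h, -⟩) <;> exact h
    have h₁c : IsCompact F₁ := hK.compact.diff hv
    have h₂c : IsCompact F₂ := hK.compact.diff hu
    have h₁ne : F₁.Nonempty := by
      refine ⟨y1, hy1.1, fun hv1 => ?_⟩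
      have : y1 ∈ K ∩ (u ∩ v) := ⟨hy1.1, hy1.2, hv1⟩
      rw [hempty] at this
      exact this
    have h₂ne : F₂.Nonempty := by
      refine ⟨y2, hy2.1, fun hu2 => ?_⟩
      have : y2 ∈ K ∩ (u ∩ v) := ⟨hy2.1, hu2, hy2.2⟩
      rw [hempty] at this
      exact this
    -- the frontier of Ω 0 is contained in K
    have hKcl : IsClosed K := hK.compact.isClosed
    have hfr0K : frontier (Ω 0) ⊆ K := by
      obtain ⟨x, -, hxe⟩ := hK.component 0
      intro y hy
      rw [hxe] at hy
      by_contra hyK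
      exact frontier_connectedComponentIn hKcl.isOpen_compl x y hy hyK
    -- the frontier of Ω 0 lies in F₁ or F₂
    have hcases : frontier (Ω 0) ⊆ F₁ ∨ frontier (Ω 0) ⊆ F₂ := by
      have hsubuv : frontier (Ω 0) ⊆ u ∪ v := fun y hy => hcov (hfr0K hy)
      by_cases hcu : (frontier (Ω 0) ∩ u).Nonempty
      · by_cases hcv : (frontier (Ω 0) ∩ v).Nonempty
        · exfalso
          obtain ⟨q, hq1, hq2⟩ := (hfrALL 0).2 u v hu hv hsubuv hcu hcv
          have : q ∈ K ∩ (u ∩ v) := ⟨hfr0K hq1, hq2⟩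
          rw [hempty] at this
          exact this
        · left
          intro y hy
          refine ⟨hfr0K hy, fun hyv => hcv ⟨y, hy, hyv⟩⟩
      · right
        intro y hy
        refine ⟨hfr0K hy, fun hyu => hcu ⟨y, hy, hyu⟩⟩
    rcases hcases with h | h
    · exact detour_aux K Ω hK hfrALL F₁ F₂ h₁c h₂c h₁ne h₂ne hdisj hunion h
    · exact detour_aux K Ω hK hfrALL F₂ F₁ h₂c h₁c h₂ne h₁ne hdisj.symm
        (by rw [hunion, union_comm]) h

theorem statement1 (K : Set (EuclideanSpace ℝ (Fin 2)))
    (Ω : ℕ → Set (EuclideanSpace ℝ (Fin 2))) (hK : IsDetourSet 2 K Ω)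
    (h0 : IsUnboundedJordanRegion (Ω 0))
    (hk : ∀ k : ℕ, k ≠ 0 → IsJordanRegion (Ω k)) :
    IsConnected K := by
  exact statement1_aux K Ω hK h0.1 (fun k hk0 => (hk k hk0).2)
end

section
/- Let K ⊆ ℝⁿ be a detour set with complementary components Ω₀, Ω₁, Ω₂, … (Ω₀ unbounded). If the n-dimensional Lebesgue measure of ∂Ω_k is zero for every k ≥ 0, and Σ_{k≥1} diam(Ω_k)ⁿ < ∞, then K has n-dimensional Lebesgue measure zero. -/
open MeasureTheory Metric Set Filter
open scoped ENNReal NNReal Topology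

section Aux

open Module

theorem MeasureTheory.MeasurePreserving.comp_ae' {α β : Type*} [MeasurableSpace α] [MeasurableSpace β]
    {μ : Measure α} {ν : Measure β} {g : α → β} (hg : MeasurePreserving g μ ν)
    {p : β → Prop} (h : ∀ᵐ y ∂ν, p y) : ∀ᵐ x ∂μ, p (g x) := by
  rw [Filter.eventually_iff, mem_ae_iff] at h ⊢
  obtain ⟨N, hsub, hNm, hN0⟩ := exists_measurable_superset_of_null h
  have : {x | p (g x)}ᶜ ⊆ g ⁻¹' N := fun x hx => hsub hx
  refine measure_mono_null this ?_
  rw [hg.measure_preimage hNm.nullMeasurableSet]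
  exact hN0

theorem line_null {n : ℕ} (K : Set (EuclideanSpace ℝ (Fin n)))
    (Ω : ℕ → Set (EuclideanSpace ℝ (Fin n)))
    (hΩopen : ∀ k, IsOpen (Ω k)) (hΩdisj : ∀ k, Ω k ⊆ Kᶜ)
    (hΩb : ∀ k : ℕ, k ≠ 0 → Bornology.IsBounded (Ω k)) (hKcl : IsClosed K)
    (x₀ : EuclideanSpace ℝ (Fin n)) (r : ℝ) (hKb : K ⊆ ball x₀ r)
    (u w : EuclideanSpace ℝ (Fin n)) (hu : ‖u‖ = 1)
    (hdp : HasDetourProperty Ω (closedBall x₀ r) (Set.range fun t : ℝ => w + t • u))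
    (hfr : ∀ k, volume {t : ℝ | w + t • u ∈ frontier (Ω k)} = 0)
    (hT : (∑' k : ℕ, Set.indicator
        {k' : ℕ | ((Set.range fun t : ℝ => w + t • u) ∩ closure (Ω k')).Nonempty}
        (fun k' => ENNReal.ofReal (Metric.diam (Ω k'))) (k + 1)) ≠ ⊤) :
    volume {t : ℝ | w + t • u ∈ K} = 0 := by
  classical
  set q : ℝ → EuclideanSpace ℝ (Fin n) := fun t => w + t • u with hq
  have hqdist : ∀ s t : ℝ, dist (q s) (q t) = dist s t := by
    intro s t
    simp only [hq, dist_eq_norm]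
    rw [add_sub_add_left_eq_sub, ← sub_smul, norm_smul, hu, mul_one, Real.norm_eq_abs]
  have hqiso : Isometry q := Isometry.of_dist_eq hqdist
  -- basic sets
  set Kpar : Set ℝ := {t : ℝ | q t ∈ K} with hKpar
  rcases Kpar.eq_empty_or_nonempty with h0 | ⟨t₀, ht₀⟩
  · rw [hKpar] at h0; rw [hKpar, h0]; simp
  set L : Set (EuclideanSpace ℝ (Fin n)) := Set.range q with hL
  set B : Set (EuclideanSpace ℝ (Fin n)) := closedBall x₀ r with hB
  have hLB : (L ∩ B).Nonempty :=
    ⟨q t₀, ⟨t₀, rfl⟩, ball_subset_closedBall (hKb ht₀)⟩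
  have hLBbd : Bornology.IsBounded (L ∩ B) :=
    (isBounded_closedBall).subset inter_subset_right
  have hLc : IsClosed L := hqiso.isClosedEmbedding.isClosed_range
  have hLBc : IsClosed (L ∩ B) := hLc.inter Metric.isClosed_closedBall
  -- the projection to line coordinates
  set π : EuclideanSpace ℝ (Fin n) → ℝ := fun x => inner ℝ (x - w) u with hπ
  have hπcont : Continuous π := by
    apply Continuous.inner <;> fun_prop
  have hπq : ∀ t, π (q t) = t := by
    intro t
    simp only [hπ, hq, add_sub_cancel_left, real_inner_smul_left]
    rw [real_inner_self_eq_norm_sq, hu]; ring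
  have hπlip : ∀ x y, dist (π x) (π y) ≤ dist x y := by
    intro x y
    rw [Real.dist_eq, dist_eq_norm]
    have h1 : π x - π y = inner ℝ (x - y) u := by
      simp only [hπ, ← inner_sub_left]
      congr 1
      abel
    rw [h1]
    calc |(inner ℝ (x - y) u : ℝ)| ≤ ‖x - y‖ * ‖u‖ := abs_real_inner_le_norm _ _
    _ = ‖x - y‖ := by rw [hu, mul_one]
  have hπqmem : ∀ {x}, x ∈ L → q (π x) = x := by
    rintro x ⟨t, rfl⟩
    rw [hπq]
  have hKparM : MeasurableSet Kpar := (hKcl.preimage hqiso.continuous).measurableSet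
  have htendinv : Tendsto (fun j : ℕ => ((j : ℝ) + 1)⁻¹) atTop (𝓝 0) := by
    simpa only [one_div] using (tendsto_one_div_add_atTop_nhds_zero_nat (𝕜 := ℝ))
  -- tail weights
  set ψ : ℕ → ℝ≥0∞ := Set.indicator {k' : ℕ | (L ∩ closure (Ω k')).Nonempty}
      (fun k' => ENNReal.ofReal (Metric.diam (Ω k'))) with hψ
  -- compact projected slabs
  set S : ℕ → ℕ → Set ℝ := fun k j =>
    π '' (closure (Ω k) ∩ cthickening ((j + 1 : ℝ)⁻¹) (L ∩ B)) with hS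
  have hCcpt : ∀ (k j : ℕ), IsCompact (closure (Ω k) ∩ cthickening ((j + 1 : ℝ)⁻¹) (L ∩ B)) := by
    intro k j
    have hcl : IsClosed (closure (Ω k) ∩ cthickening ((j + 1 : ℝ)⁻¹) (L ∩ B)) :=
      isClosed_closure.inter isClosed_cthickening
    have hbd : Bornology.IsBounded (cthickening ((j + 1 : ℝ)⁻¹) (L ∩ B)) := hLBbd.cthickening
    obtain ⟨R, hR⟩ := hbd.subset_closedBall x₀
    exact (isCompact_closedBall x₀ R).of_isClosed_subset hcl (inter_subset_right.trans hR)
  have hScpt : ∀ k j, IsCompact (S k j) := fun k j => (hCcpt k j).image hπcont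
  have hSmono : ∀ k, Antitone (fun j => S k j) := by
    intro k j j' hjj'
    apply image_mono
    apply inter_subset_inter_right
    apply cthickening_mono
    apply inv_anti₀ (by positivity)
    exact_mod_cast by exact_mod_cast add_le_add_left (Nat.cast_le.2 hjj') 1
  -- intersection of slabs is in the frontier slice
  have hfrk : ∀ k, Kpar ∩ (⋂ j : ℕ, S k j) ⊆ {t : ℝ | q t ∈ frontier (Ω k)} := by
    intro k t ⟨htK, htS⟩
    set Vj : ℕ → Set (EuclideanSpace ℝ (Fin n)) := fun j =>
      (closure (Ω k) ∩ cthickening ((j + 1 : ℝ)⁻¹) (L ∩ B)) ∩ π ⁻¹' {t} with hVj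
    have hne : ∀ j, (Vj j).Nonempty := by
      intro j
      obtain ⟨y, hy, hyt⟩ := mem_iInter.1 htS j
      exact ⟨y, hy, hyt⟩
    have hsub : ∀ j, Vj (j + 1) ⊆ Vj j := by
      intro j
      apply inter_subset_inter_left
      apply inter_subset_inter_right
      apply cthickening_mono
      apply inv_anti₀ (by positivity)
      push_cast
      linarith
    have hcpt : IsCompact (Vj 0) :=
      (hCcpt k 0).inter_right (isClosed_singleton.preimage hπcont)
    have hclosed : ∀ j, IsClosed (Vj j) :=
      fun j => (isClosed_closure.inter isClosed_cthickening).inter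
        (isClosed_singleton.preimage hπcont)
    obtain ⟨y, hy⟩ := IsCompact.nonempty_iInter_of_sequence_nonempty_isCompact_isClosed
      Vj hsub hne hcpt hclosed
    have hyL : y ∈ L ∩ B := by
      have h1 : ∀ j : ℕ, EMetric.infEdist y (L ∩ B) ≤ ENNReal.ofReal ((j + 1 : ℝ)⁻¹) :=
        fun j => mem_cthickening_iff.1 (mem_iInter.1 hy j).1.2
      have h2 : EMetric.infEdist y (L ∩ B) = 0 := by
        refine le_antisymm ?_ zero_le
        have htend : Tendsto (fun j : ℕ => ENNReal.ofReal ((j + 1 : ℝ)⁻¹)) atTop (𝓝 0) := by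
          have := ENNReal.tendsto_ofReal htendinv
          simpa using this
        exact ge_of_tendsto htend (Eventually.of_forall h1)
      have h3 := EMetric.mem_closure_iff_infEdist_zero.2 h2
      rwa [hLBc.closure_eq] at h3
    have hyπ : π y = t := (mem_iInter.1 hy 0).2
    have hyq : y = q t := by rw [← hπqmem hyL.1, hyπ]
    have hqcl : q t ∈ closure (Ω k) := hyq ▸ (mem_iInter.1 hy 0).1.1
    rw [mem_setOf_eq, (hΩopen k).frontier_eq]
    exact ⟨hqcl, fun hmem => (hΩdisj k hmem) htK⟩
  -- the key estimate
  have key : ∀ m : ℕ, volume Kpar ≤ ∑' i : ℕ, ψ (i + (m + 1)) := by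
    intro m
    have main : ∀ j : ℕ, volume Kpar ≤
        ENNReal.ofReal (8 * ((j : ℝ) + 1)⁻¹)
          + ∑ k ∈ Finset.range (m + 1), volume (Kpar ∩ S k j)
          + ∑' i : ℕ, ψ (i + (m + 1)) := by
      intro j
      set ε : ℝ := ((j : ℝ) + 1)⁻¹ with hε
      have hεpos : 0 < ε := by positivity
      obtain ⟨γ, hγc, hγd, hγsub, hγfin, hγL⟩ := hdp ε hεpos
      set Γ := γ '' Icc 0 1 with hΓ
      have hΓcpt : IsCompact Γ := isCompact_Icc.image_of_continuousOn hγc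
      have hΓne : Γ.Nonempty := (nonempty_Icc.2 zero_le_one).image γ
      have hΓconn : IsPreconnected Γ := isPreconnected_Icc.image γ hγc
      have hfin' : EMetric.hausdorffEdist Γ (L ∩ B) ≠ ⊤ :=
        hausdorffEdist_ne_top_of_nonempty_of_bounded hΓne hLB hΓcpt.isBounded hLBbd
      set Fs := hγfin.toFinset with hFs
      have claimA : Γ ⊆ ⋃ k ∈ Fs, (closure (Ω k) ∩ cthickening ε (L ∩ B)) := by
        intro p hp
        obtain ⟨_, ⟨k, rfl⟩, hpk⟩ := hγsub hp
        have hkFs : k ∈ Fs := by rw [hFs, Set.Finite.mem_toFinset]; exact ⟨p, hp, hpk⟩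
        refine mem_iUnion₂.2 ⟨k, hkFs, hpk, ?_⟩
        rw [mem_cthickening_iff]
        have h1 : infDist p (L ∩ B) ≤ hausdorffDist Γ (L ∩ B) :=
          infDist_le_hausdorffDist_of_mem hp hfin'
        have h2 : infDist p (L ∩ B) ≤ ε := h1.trans hγd
        have h3 : EMetric.infEdist p (L ∩ B) ≠ ⊤ := infEdist_ne_top hLB
        exact (ENNReal.le_ofReal_iff_toReal_le h3 hεpos.le).2 h2
      have hπΓcpt : IsCompact (π '' Γ) := hΓcpt.image hπcont
      have hπΓne : (π '' Γ).Nonempty := hΓne.image π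
      set α' := sInf (π '' Γ) with hα'
      set β' := sSup (π '' Γ) with hβ'
      have claimπΓ : π '' Γ = Icc α' β' := by
        apply Subset.antisymm
        · exact fun s hs => ⟨csInf_le hπΓcpt.bddBelow hs, le_csSup hπΓcpt.bddAbove hs⟩
        · exact (hΓconn.image π hπcont.continuousOn).Icc_subset
            (hπΓcpt.sInf_mem hπΓne) (hπΓcpt.sSup_mem hπΓne)
      have cover : Kpar ⊆ (Icc (α' - 2 * ε) (α' + 2 * ε) ∪ Icc (β' - 2 * ε) (β' + 2 * ε)) ∪
          ((⋃ k ∈ Fs.filter (fun k => k ≤ m), (Kpar ∩ S k j)) ∪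
            (⋃ k ∈ Fs.filter (fun k => m + 1 ≤ k), S k j)) := by
        intro t ht
        have hx : q t ∈ L ∩ B := ⟨⟨t, rfl⟩, ball_subset_closedBall (hKb ht)⟩
        have hd2 : hausdorffDist Γ (L ∩ B) < 2 * ε := lt_of_le_of_lt hγd (by linarith)
        obtain ⟨p, hpΓ, hpd⟩ := exists_dist_lt_of_hausdorffDist_lt' hx hd2 hfin'
        have hts : |t - π p| < 2 * ε := by
          have h4 := hπlip (q t) p
          rw [hπq] at h4
          calc |t - π p| = dist t (π p) := (Real.dist_eq _ _).symm
          _ ≤ dist (q t) p := h4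
          _ < 2 * ε := by rwa [dist_comm] at hpd
        have hpI : π p ∈ Icc α' β' := claimπΓ ▸ mem_image_of_mem π hpΓ
        rw [abs_lt] at hts
        by_cases h1 : t < α'
        · exact Or.inl (Or.inl ⟨by have := hpI.1; linarith, by linarith⟩)
        by_cases h2 : β' < t
        · exact Or.inl (Or.inr ⟨by linarith, by have := hpI.2; linarith⟩)
        have htI : t ∈ π '' Γ := by
          rw [claimπΓ]; exact ⟨le_of_not_gt h1, le_of_not_gt h2⟩
        obtain ⟨p', hp'Γ, hp't⟩ := htI
        obtain ⟨k, hkFs, hpk⟩ := mem_iUnion₂.1 (claimA hp'Γ)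
        have htS : t ∈ S k j := ⟨p', hpk, hp't⟩
        by_cases hk : k ≤ m
        · exact Or.inr (Or.inl (mem_iUnion₂.2 ⟨k, Finset.mem_filter.2 ⟨hkFs, hk⟩, ht, htS⟩))
        · exact Or.inr (Or.inr (mem_iUnion₂.2 ⟨k, Finset.mem_filter.2 ⟨hkFs, by omega⟩, htS⟩))
      have hSd : ∀ k ∈ Fs.filter (fun k => m + 1 ≤ k), volume (S k j) ≤ ψ k := by
        intro k hk
        rw [Finset.mem_filter] at hk
        obtain ⟨hkFs, hkm⟩ := hk
        have hkL : (L ∩ closure (Ω k)).Nonempty := hγL (by rwa [hFs, Set.Finite.mem_toFinset] at hkFs)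
        have hmem : k ∈ {k' : ℕ | (L ∩ closure (Ω k')).Nonempty} := hkL
        have hψk : ψ k = ENNReal.ofReal (Metric.diam (Ω k)) := Set.indicator_of_mem hmem _
        rw [hψk]
        rcases (S k j).eq_empty_or_nonempty with hSe | hSne
        · rw [hSe]; simp
        have hScp := hScpt k j
        have hbd : Bornology.IsBounded (S k j) := hScp.isBounded
        have hΩkb : Bornology.IsBounded (closure (Ω k)) := (hΩb k (by omega)).closure
        have hsub2 : S k j ⊆ Icc (sInf (S k j)) (sSup (S k j)) :=
          fun s hs => ⟨csInf_le hScp.bddBelow hs, le_csSup hScp.bddAbove hs⟩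
        calc volume (S k j) ≤ volume (Icc (sInf (S k j)) (sSup (S k j))) := measure_mono hsub2
        _ = ENNReal.ofReal (sSup (S k j) - sInf (S k j)) := Real.volume_Icc
        _ ≤ ENNReal.ofReal (Metric.diam (Ω k)) := by
            apply ENNReal.ofReal_le_ofReal
            have h5 : dist (sSup (S k j)) (sInf (S k j)) ≤ Metric.diam (S k j) :=
              dist_le_diam_of_mem hbd (hScp.sSup_mem hSne) (hScp.sInf_mem hSne)
            rw [Real.dist_eq] at h5
            have h6 : Metric.diam (S k j) ≤ Metric.diam (closure (Ω k)) := by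
              apply diam_le_of_forall_dist_le Metric.diam_nonneg
              rintro s ⟨y, hy, rfl⟩ s' ⟨y', hy', rfl⟩
              calc dist (π y) (π y') ≤ dist y y' := hπlip y y'
              _ ≤ Metric.diam (closure (Ω k)) := dist_le_diam_of_mem hΩkb hy.1 hy'.1
            rw [Metric.diam_closure] at h6
            have h7 := le_abs_self (sSup (S k j) - sInf (S k j))
            linarith
      have hreindex : ∑ k ∈ Fs.filter (fun k => m + 1 ≤ k), ψ k ≤ ∑' i : ℕ, ψ (i + (m + 1)) := by
        have h7 : ∑ i ∈ (Fs.filter (fun k => m + 1 ≤ k)).image (fun k => k - (m + 1)),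
            ψ (i + (m + 1)) = ∑ k ∈ Fs.filter (fun k => m + 1 ≤ k), ψ k := by
          rw [Finset.sum_image]
          · apply Finset.sum_congr rfl
            intro k hk
            rw [Finset.mem_filter] at hk
            congr 1
            omega
          · intro a ha b hb hab
            rw [Finset.mem_coe, Finset.mem_filter] at ha hb
            simp only at hab
            omega
        rw [← h7]
        exact ENNReal.sum_le_tsum _
      calc volume Kpar
          ≤ volume ((Icc (α' - 2 * ε) (α' + 2 * ε) ∪ Icc (β' - 2 * ε) (β' + 2 * ε)) ∪
            ((⋃ k ∈ Fs.filter (fun k => k ≤ m), (Kpar ∩ S k j)) ∪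
              (⋃ k ∈ Fs.filter (fun k => m + 1 ≤ k), S k j))) := measure_mono cover
      _ ≤ (volume (Icc (α' - 2 * ε) (α' + 2 * ε)) + volume (Icc (β' - 2 * ε) (β' + 2 * ε))) +
            (volume (⋃ k ∈ Fs.filter (fun k => k ≤ m), (Kpar ∩ S k j)) +
              volume (⋃ k ∈ Fs.filter (fun k => m + 1 ≤ k), S k j)) :=
        le_trans (measure_union_le _ _) (add_le_add (measure_union_le _ _) (measure_union_le _ _))
      _ ≤ ENNReal.ofReal (8 * ε) + (∑ k ∈ Finset.range (m + 1), volume (Kpar ∩ S k j)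
            + ∑' i : ℕ, ψ (i + (m + 1))) := by
          apply add_le_add
          · rw [Real.volume_Icc, Real.volume_Icc, ← ENNReal.ofReal_add (by linarith) (by linarith)]
            apply ENNReal.ofReal_le_ofReal
            ring_nf
            linarith
          apply add_le_add
          · refine le_trans (measure_biUnion_finset_le _ _) ?_
            apply Finset.sum_le_sum_of_subset
            intro k hk
            rw [Finset.mem_filter] at hk
            rw [Finset.mem_range]
            omega
          · refine le_trans (measure_biUnion_finset_le _ _) ?_
            exact le_trans (Finset.sum_le_sum hSd) hreindex
      _ = ENNReal.ofReal (8 * ε) + ∑ k ∈ Finset.range (m + 1), volume (Kpar ∩ S k j)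
            + ∑' i : ℕ, ψ (i + (m + 1)) := by rw [add_assoc]
    -- let j → ∞
    have hterm : ∀ k, Tendsto (fun j => volume (Kpar ∩ S k j)) atTop (𝓝 0) := by
      intro k
      have h8 : Tendsto (fun j => volume (Kpar ∩ S k j)) atTop
          (𝓝 (volume (⋂ j, Kpar ∩ S k j))) := by
        apply tendsto_measure_iInter_atTop
        · exact fun j => (hKparM.inter (hScpt k j).measurableSet).nullMeasurableSet
        · exact fun j j' hjj' => inter_subset_inter_right _ (hSmono k hjj')
        · exact ⟨0, (lt_of_le_of_lt (measure_mono inter_subset_right)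
            (hScpt k 0).measure_lt_top).ne⟩
      have h9 : volume (⋂ j, Kpar ∩ S k j) = 0 := by
        apply measure_mono_null _ (hfr k)
        rw [← inter_iInter]
        exact hfrk k
      rwa [h9] at h8
    have hlim : Tendsto (fun j : ℕ => ENNReal.ofReal (8 * ((j : ℝ) + 1)⁻¹)
        + ∑ k ∈ Finset.range (m + 1), volume (Kpar ∩ S k j)
        + ∑' i : ℕ, ψ (i + (m + 1))) atTop (𝓝 (0 + 0 + ∑' i : ℕ, ψ (i + (m + 1)))) := by
      refine Filter.Tendsto.add (Filter.Tendsto.add ?_ ?_) tendsto_const_nhds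
      · have h10 : Tendsto (fun j : ℕ => 8 * ((j : ℝ) + 1)⁻¹) atTop (𝓝 (8 * 0)) :=
          htendinv.const_mul 8
        rw [mul_zero] at h10
        simpa using ENNReal.tendsto_ofReal h10
      · have h11 := tendsto_finset_sum (Finset.range (m + 1)) (fun k _ => hterm k)
        simpa using h11
    have h12 := ge_of_tendsto hlim (Eventually.of_forall main)
    simpa using h12
  -- let m → ∞
  have htail := ENNReal.tendsto_sum_nat_add (fun i => ψ (i + 1)) hT
  have hfinal : volume Kpar ≤ 0 := by
    apply ge_of_tendsto htail
    apply Eventually.of_forall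
    intro m
    exact key m
  exact le_antisymm hfinal zero_le

end Aux


set_option maxHeartbeats 1000000 in
theorem statement6 {n : ℕ} (K : Set (EuclideanSpace ℝ (Fin n)))
    (Ω : ℕ → Set (EuclideanSpace ℝ (Fin n))) (hK : IsDetourSet n K Ω)
    (hfr : ∀ k : ℕ, volume (frontier (Ω k)) = 0)
    (hsum : Summable fun k : ℕ => Metric.diam (Ω (k + 1)) ^ n) :
    volume K = 0 := by
  classical
  -- components are open subsets of `Kᶜ`
  have hΩopen : ∀ k, IsOpen (Ω k) := by
    intro k
    obtain ⟨x, _, heq⟩ := hK.component k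
    rw [heq]
    exact hK.compact.isClosed.isOpen_compl.connectedComponentIn
  have hΩdisj : ∀ k, Ω k ⊆ Kᶜ := by
    intro k
    obtain ⟨x, _, heq⟩ := hK.component k
    rw [heq]
    exact connectedComponentIn_subset _ _
  -- dimension is positive
  have hn : 1 ≤ n := by
    rcases Nat.eq_zero_or_pos n with h0 | h; swap
    · exact h
    subst h0
    exfalso
    apply hK.unbounded
    refine (isBounded_closedBall (x := (0 : EuclideanSpace ℝ (Fin 0))) (r := 1)).subset ?_
    intro x _
    have hx0 : x = 0 := by
      ext i
      exact absurd i.2 (by omega)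
    rw [hx0]
    exact mem_closedBall_self zero_le_one
  obtain ⟨x₀, r, hr, hKb, v, hv, hdet⟩ := hK.detour
  set i0 : Fin n := ⟨0, by omega⟩ with hi0
  have hdet0 := hdet i0
  set v0 : EuclideanSpace ℝ (Fin n) := v i0 with hv0def
  have hv0 : v0 ≠ 0 := hv.ne_zero i0
  set u : EuclideanSpace ℝ (Fin n) := ‖v0‖⁻¹ • v0 with hu_def
  have hu : ‖u‖ = 1 := norm_smul_inv_norm hv0
  set V : Submodule ℝ (EuclideanSpace ℝ (Fin n)) := Submodule.span ℝ {v0} with hV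
  set W : Submodule ℝ (EuclideanSpace ℝ (Fin n)) := Vᗮ with hW
  have huV : u ∈ V := Submodule.smul_mem _ _ (Submodule.mem_span_singleton_self v0)
  have hrank : Module.finrank ℝ ↥W + 1 = n := by
    have h1 : Module.finrank ℝ ↥V = 1 := finrank_span_singleton hv0
    have h2 := V.finrank_add_finrank_orthogonal
    rw [h1, finrank_euclideanSpace_fin, ← hW] at h2
    omega
  -- orthonormal family
  set c : OrthonormalBasis (Fin (Module.finrank ℝ ↥W)) ℝ ↥W := stdOrthonormalBasis ℝ ↥W with hc
  set f : (Fin (Module.finrank ℝ ↥W)) ⊕ Unit → EuclideanSpace ℝ (Fin n) :=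
    Sum.elim (fun i => (c i : EuclideanSpace ℝ (Fin n))) (fun _ => u) with hf
  have horth : Orthonormal ℝ f := by
    rw [orthonormal_iff_ite]
    rintro (i | i) (j | j)
    · simpa [f, Submodule.coe_inner] using (orthonormal_iff_ite.1 c.orthonormal) i j
    · have h0 : (inner ℝ u (c i : EuclideanSpace ℝ (Fin n)) : ℝ) = 0 :=
        (Submodule.mem_orthogonal V _).1 (c i).2 u huV
      simp only [hf, Sum.elim_inl, Sum.elim_inr]
      rw [if_neg (by simp), real_inner_comm]
      exact h0
    · have h0 : (inner ℝ u (c j : EuclideanSpace ℝ (Fin n)) : ℝ) = 0 :=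
        (Submodule.mem_orthogonal V _).1 (c j).2 u huV
      simp only [hf, Sum.elim_inl, Sum.elim_inr]
      rw [if_neg (by simp)]
      exact h0
    · have h0 : (inner ℝ u u : ℝ) = 1 := by
        rw [real_inner_self_eq_norm_sq, hu]; norm_num
      cases i; cases j
      simp only [hf, Sum.elim_inl, Sum.elim_inr, if_true]
      exact h0
  have hcard : Fintype.card ((Fin (Module.finrank ℝ ↥W)) ⊕ Unit) = Module.finrank ℝ (EuclideanSpace ℝ (Fin n)) := by
    simp [finrank_euclideanSpace_fin, hrank]
  set b : OrthonormalBasis ((Fin (Module.finrank ℝ ↥W)) ⊕ Unit) ℝ (EuclideanSpace ℝ (Fin n)) :=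
    (basisOfOrthonormalOfCardEqFinrank horth hcard).toOrthonormalBasis
      (by rwa [coe_basisOfOrthonormalOfCardEqFinrank]) with hb
  have hbcoe : ∀ s, b s = f s := by
    intro s
    rw [hb, Module.Basis.coe_toOrthonormalBasis, coe_basisOfOrthonormalOfCardEqFinrank]
  -- the parametrization map
  set F : EuclideanSpace ℝ (Fin (Module.finrank ℝ ↥W)) × ℝ → EuclideanSpace ℝ (Fin n) :=
    fun p => ((c.repr.symm p.1 : ↥W) : EuclideanSpace ℝ (Fin n)) + p.2 • u with hFdef
  have hrepr : ∀ y : EuclideanSpace ℝ ((Fin (Module.finrank ℝ ↥W)) ⊕ Unit),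
      b.repr.symm y = (∑ i, y (Sum.inl i) • (c i : EuclideanSpace ℝ (Fin n)))
        + y (Sum.inr ()) • u := by
    intro y
    rw [← b.sum_repr_symm, Fintype.sum_sum_type]
    simp [hbcoe, hf]
  have hFeq : F = (b.repr.symm ∘ ((MeasurableEquiv.toLp 2 (((Fin (Module.finrank ℝ ↥W)) ⊕ Unit) → ℝ)).symm.symm ∘
      ((MeasurableEquiv.sumPiEquivProdPi (fun _ : (Fin (Module.finrank ℝ ↥W)) ⊕ Unit => ℝ)).symm ∘
        (Prod.map (MeasurableEquiv.toLp 2 (Fin (Module.finrank ℝ ↥W) → ℝ)).symm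
          (MeasurableEquiv.funUnique Unit ℝ).symm)))) := by
    funext p
    obtain ⟨a, t⟩ := p
    simp only [Function.comp_apply, Prod.map_apply]
    rw [hrepr]
    have h1 : ((c.repr.symm a : ↥W) : EuclideanSpace ℝ (Fin n))
        = ∑ i, a i • (c i : EuclideanSpace ℝ (Fin n)) := by
      rw [← c.sum_repr_symm, Submodule.coe_sum]
      simp
    have h2 : ∀ i, ((MeasurableEquiv.toLp 2 (((Fin (Module.finrank ℝ ↥W)) ⊕ Unit) → ℝ)).symm.symm
        ((MeasurableEquiv.sumPiEquivProdPi (fun _ : (Fin (Module.finrank ℝ ↥W)) ⊕ Unit => ℝ)).symm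
          ((MeasurableEquiv.toLp 2 (Fin (Module.finrank ℝ ↥W) → ℝ)).symm a,
            (MeasurableEquiv.funUnique Unit ℝ).symm t))) (Sum.inl i) = a i := fun i => rfl
    have h3 : ((MeasurableEquiv.toLp 2 (((Fin (Module.finrank ℝ ↥W)) ⊕ Unit) → ℝ)).symm.symm
        ((MeasurableEquiv.sumPiEquivProdPi (fun _ : (Fin (Module.finrank ℝ ↥W)) ⊕ Unit => ℝ)).symm
          ((MeasurableEquiv.toLp 2 (Fin (Module.finrank ℝ ↥W) → ℝ)).symm a,
            (MeasurableEquiv.funUnique Unit ℝ).symm t))) (Sum.inr ()) = t := rfl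
    simp only [h2, h3, hFdef, h1]
  have hFmp : MeasurePreserving F volume volume := by
    rw [hFeq]
    have h1 : MeasurePreserving
        (Prod.map (MeasurableEquiv.toLp 2 (Fin (Module.finrank ℝ ↥W) → ℝ)).symm
          (MeasurableEquiv.funUnique Unit ℝ).symm)
        volume volume := by
      rw [Measure.volume_eq_prod, Measure.volume_eq_prod]
      exact (EuclideanSpace.volume_preserving_symm_measurableEquiv_toLp _).prod
        (volume_preserving_funUnique Unit ℝ).symm
    exact (b.repr.symm.measurePreserving).comp
      (((EuclideanSpace.volume_preserving_symm_measurableEquiv_toLp _).symm).comp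
        ((volume_measurePreserving_sumPiEquivProdPi_symm _).comp h1))
  -- notation
  set g : EuclideanSpace ℝ (Fin (Module.finrank ℝ ↥W)) → EuclideanSpace ℝ (Fin n) :=
    fun a => ((c.repr.symm a : ↥W) : EuclideanSpace ℝ (Fin n)) with hg
  have hFg : ∀ a t, F (a, t) = g a + t • u := fun a t => rfl
  have hFcont : Continuous F := by
    apply Continuous.add
    · exact continuous_subtype_val.comp (c.repr.symm.continuous.comp continuous_fst)
    · exact continuous_snd.smul continuous_const
  -- rewriting lines
  have hvu : v0 = ‖v0‖ • u := by
    rw [hu_def, smul_smul, mul_inv_cancel₀ (norm_ne_zero_iff.2 hv0), one_smul]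
  have hline : ∀ x : EuclideanSpace ℝ (Fin n),
      lineThrough x v0 = Set.range (fun t : ℝ => x + t • u) := by
    intro x
    ext y
    constructor
    · rintro ⟨t, rfl⟩
      refine ⟨t * ‖v0‖, ?_⟩
      show x + (t * ‖v0‖) • u = x + t • v0
      rw [← smul_smul, ← hvu]
    · rintro ⟨t, rfl⟩
      refine ⟨t * ‖v0‖⁻¹, ?_⟩
      show x + t • u = x + (t * ‖v0‖⁻¹) • v0
      rw [← smul_smul, ← hu_def]
  -- (G1) almost every line has the detour property
  have hG1 : ∀ᵐ a : EuclideanSpace ℝ (Fin (Module.finrank ℝ ↥W)),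
      HasDetourProperty Ω (closedBall x₀ r) (lineThrough (g a) v0) :=
    (c.measurePreserving_repr_symm).comp_ae' hdet0
  -- (G2) almost every line meets each frontier in a null set
  have hG2 : ∀ᵐ a : EuclideanSpace ℝ (Fin (Module.finrank ℝ ↥W)),
      ∀ k, volume {t : ℝ | F (a, t) ∈ frontier (Ω k)} = 0 := by
    rw [MeasureTheory.ae_all_iff]
    intro k
    have hm : MeasurableSet (F ⁻¹' frontier (Ω k)) :=
      isClosed_frontier.measurableSet.preimage hFmp.measurable
    have h0 : (volume : Measure (EuclideanSpace ℝ (Fin (Module.finrank ℝ ↥W)) × ℝ))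
        (F ⁻¹' frontier (Ω k)) = 0 := by
      rw [hFmp.measure_preimage isClosed_frontier.measurableSet.nullMeasurableSet]
      exact hfr k
    rw [Measure.volume_eq_prod] at h0
    have h1 := (Measure.measure_prod_null hm).1 h0
    filter_upwards [h1] with a ha
    exact ha
  -- (G3) summability along almost every line
  set A : ℕ → Set (EuclideanSpace ℝ (Fin (Module.finrank ℝ ↥W))) :=
    fun k => {a | ∃ t : ℝ, F (a, t) ∈ closure (Ω k)} with hA
  have hAcpt : ∀ k, k ≠ 0 → IsCompact (A k) := by
    intro k hk
    rcases (closure (Ω k)).eq_empty_or_nonempty with hce | ⟨z₀, hz₀⟩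
    · have : A k = ∅ := by
        rw [hA]
        ext a
        simp [hce]
      rw [this]
      exact isCompact_empty
    obtain ⟨R, hR⟩ := ((hK.bounded k hk).closure).subset_closedBall (0 : EuclideanSpace ℝ (Fin n))
    have hR0 : 0 ≤ R := by
      have := hR hz₀
      rw [mem_closedBall, dist_zero_right] at this
      exact (norm_nonneg _).trans this
    have hpre : F ⁻¹' closure (Ω k) ⊆
        (closedBall (0 : EuclideanSpace ℝ (Fin (Module.finrank ℝ ↥W))) R) ×ˢ (closedBall (0 : ℝ) R) := by
      rintro ⟨a, t⟩ hat
      have hnorm : ‖F (a, t)‖ ≤ R := by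
        have := hR hat
        rwa [mem_closedBall, dist_zero_right] at this
      have hinner : (inner ℝ ((c.repr.symm a : ↥W) : EuclideanSpace ℝ (Fin n)) u : ℝ) = 0 := by
        rw [real_inner_comm]
        exact (Submodule.mem_orthogonal V _).1 (c.repr.symm a).2 u huV
      have hsq : ‖F (a, t)‖ ^ 2 = ‖a‖ ^ 2 + t ^ 2 := by
        rw [hFg, norm_add_sq_real, real_inner_smul_right, hinner, norm_smul, hu, mul_one,
          Real.norm_eq_abs, sq_abs]
        have hna : ‖((c.repr.symm a : ↥W) : EuclideanSpace ℝ (Fin n))‖ = ‖a‖ := by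
          rw [Submodule.norm_coe, LinearIsometryEquiv.norm_map]
        rw [hna]
        ring
      constructor
      · rw [mem_closedBall, dist_zero_right]
        nlinarith [norm_nonneg (F (a, t)), norm_nonneg a, sq_nonneg t]
      · rw [mem_closedBall, dist_zero_right, Real.norm_eq_abs]
        nlinarith [norm_nonneg (F (a, t)), norm_nonneg a, abs_nonneg t, sq_abs t]
    have hclosed : IsClosed (F ⁻¹' closure (Ω k)) := isClosed_closure.preimage hFcont
    have hcpt2 : IsCompact (F ⁻¹' closure (Ω k)) :=
      ((isCompact_closedBall _ _).prod (isCompact_closedBall _ _)).of_isClosed_subset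
        hclosed hpre
    have himg : A k = Prod.fst '' (F ⁻¹' closure (Ω k)) := by
      ext a
      constructor
      · rintro ⟨t, ht⟩
        exact ⟨(a, t), ht, rfl⟩
      · rintro ⟨⟨a', t⟩, hm, rfl⟩
        exact ⟨t, hm⟩
    rw [himg]
    exact hcpt2.image continuous_fst
  have hκlt : volume (closedBall (0 : EuclideanSpace ℝ (Fin (Module.finrank ℝ ↥W))) 1) ≠ ⊤ :=
    (isCompact_closedBall _ _).measure_lt_top.ne
  have hAvol : ∀ k, k ≠ 0 → volume (A k) ≤
      ENNReal.ofReal (Metric.diam (Ω k)) ^ Module.finrank ℝ ↥W *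
        volume (closedBall (0 : EuclideanSpace ℝ (Fin (Module.finrank ℝ ↥W))) 1) := by
    intro k hk
    rcases (A k).eq_empty_or_nonempty with hAe | ⟨a₀, ha₀⟩
    · rw [hAe]
      simp
    have hsub : A k ⊆ closedBall a₀ (Metric.diam (Ω k)) := by
      intro a ha
      obtain ⟨t, ht⟩ := ha
      obtain ⟨t₀, ht₀⟩ := ha₀
      rw [mem_closedBall]
      have h5 : dist (F (a, t)) (F (a₀, t₀)) ≤ Metric.diam (Ω k) := by
        have := dist_le_diam_of_mem ((hK.bounded k hk).closure) ht ht₀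
        rwa [Metric.diam_closure] at this
      have h6 : dist a a₀ ≤ dist (F (a, t)) (F (a₀, t₀)) := by
        rw [dist_eq_norm, dist_eq_norm]
        have hdiff : F (a, t) - F (a₀, t₀) =
            ((c.repr.symm (a - a₀) : ↥W) : EuclideanSpace ℝ (Fin n)) + (t - t₀) • u := by
          rw [hFg, hFg, map_sub]
          push_cast [Submodule.coe_sub]
          rw [sub_smul]
          abel
        have hinner : (inner ℝ ((c.repr.symm (a - a₀) : ↥W) : EuclideanSpace ℝ (Fin n)) u : ℝ) = 0 := by
          rw [real_inner_comm]
          exact (Submodule.mem_orthogonal V _).1 (c.repr.symm (a - a₀)).2 u huV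
        have hna : ‖((c.repr.symm (a - a₀) : ↥W) : EuclideanSpace ℝ (Fin n))‖ = ‖a - a₀‖ := by
          rw [Submodule.norm_coe, LinearIsometryEquiv.norm_map]
        have hsq : ‖F (a, t) - F (a₀, t₀)‖ ^ 2 = ‖a - a₀‖ ^ 2 + (t - t₀) ^ 2 := by
          rw [hdiff, norm_add_sq_real, real_inner_smul_right, hinner, norm_smul, hu, mul_one,
            Real.norm_eq_abs, sq_abs, hna]
          ring
        nlinarith [norm_nonneg (F (a, t) - F (a₀, t₀)), norm_nonneg (a - a₀), sq_nonneg (t - t₀)]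
      exact h6.trans h5
    calc volume (A k) ≤ volume (closedBall a₀ (Metric.diam (Ω k))) := measure_mono hsub
    _ = ENNReal.ofReal (Metric.diam (Ω k) ^ Module.finrank ℝ (EuclideanSpace ℝ (Fin (Module.finrank ℝ ↥W)))) *
          volume (closedBall (0 : EuclideanSpace ℝ (Fin (Module.finrank ℝ ↥W))) 1) :=
        Measure.addHaar_closedBall' _ _ Metric.diam_nonneg
    _ = ENNReal.ofReal (Metric.diam (Ω k)) ^ Module.finrank ℝ ↥W *
          volume (closedBall (0 : EuclideanSpace ℝ (Fin (Module.finrank ℝ ↥W))) 1) := by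
        rw [ENNReal.ofReal_pow Metric.diam_nonneg, finrank_euclideanSpace_fin]
  have hG3 : ∀ᵐ a : EuclideanSpace ℝ (Fin (Module.finrank ℝ ↥W)),
      (∑' k : ℕ, Set.indicator (A (k + 1))
        (fun _ => ENNReal.ofReal (Metric.diam (Ω (k + 1)))) a) ≠ ⊤ := by
    have hmeas : ∀ k : ℕ, Measurable (Set.indicator (A (k + 1))
        (fun _ => ENNReal.ofReal (Metric.diam (Ω (k + 1)))) :
          EuclideanSpace ℝ (Fin (Module.finrank ℝ ↥W)) → ℝ≥0∞) :=
      fun k => measurable_const.indicator (hAcpt (k + 1) (by omega)).measurableSet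
    have hint : ∫⁻ a, (∑' k : ℕ, Set.indicator (A (k + 1))
        (fun _ => ENNReal.ofReal (Metric.diam (Ω (k + 1)))) a) ∂volume ≠ ⊤ := by
      rw [lintegral_tsum (fun k => (hmeas k).aemeasurable)]
      have heval : ∀ k : ℕ, ∫⁻ a, Set.indicator (A (k + 1))
          (fun _ => ENNReal.ofReal (Metric.diam (Ω (k + 1)))) a ∂volume
          = ENNReal.ofReal (Metric.diam (Ω (k + 1))) * volume (A (k + 1)) := by
        intro k
        rw [lintegral_indicator_const (hAcpt (k + 1) (by omega)).measurableSet]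
      rw [tsum_congr heval]
      have hb1 : ∑' k : ℕ, ENNReal.ofReal (Metric.diam (Ω (k + 1))) * volume (A (k + 1))
          ≤ ∑' k : ℕ, ENNReal.ofReal (Metric.diam (Ω (k + 1))) ^ n *
              volume (closedBall (0 : EuclideanSpace ℝ (Fin (Module.finrank ℝ ↥W))) 1) := by
        apply ENNReal.tsum_le_tsum
        intro k
        calc ENNReal.ofReal (Metric.diam (Ω (k + 1))) * volume (A (k + 1))
            ≤ ENNReal.ofReal (Metric.diam (Ω (k + 1))) *
              (ENNReal.ofReal (Metric.diam (Ω (k + 1))) ^ Module.finrank ℝ ↥W *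
                volume (closedBall (0 : EuclideanSpace ℝ (Fin (Module.finrank ℝ ↥W))) 1)) :=
            mul_le_mul_right (hAvol (k + 1) (by omega)) _
        _ = ENNReal.ofReal (Metric.diam (Ω (k + 1))) ^ n *
              volume (closedBall (0 : EuclideanSpace ℝ (Fin (Module.finrank ℝ ↥W))) 1) := by
            rw [← mul_assoc, ← pow_succ', show Module.finrank ℝ ↥W + 1 = n from hrank]
      have hb2 : ∑' k : ℕ, ENNReal.ofReal (Metric.diam (Ω (k + 1))) ^ n *
          volume (closedBall (0 : EuclideanSpace ℝ (Fin (Module.finrank ℝ ↥W))) 1) ≠ ⊤ := by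
        rw [ENNReal.tsum_mul_right]
        apply ENNReal.mul_ne_top _ hκlt
        have heq : ∀ k : ℕ, ENNReal.ofReal (Metric.diam (Ω (k + 1))) ^ n
            = ENNReal.ofReal (Metric.diam (Ω (k + 1)) ^ n) :=
          fun k => (ENNReal.ofReal_pow Metric.diam_nonneg n).symm
        rw [tsum_congr heq, ← ENNReal.ofReal_tsum_of_nonneg
          (fun k => pow_nonneg Metric.diam_nonneg n) hsum]
        exact ENNReal.ofReal_ne_top
      exact (lt_of_le_of_lt hb1 (lt_top_iff_ne_top.2 hb2)).ne
    have := ae_lt_top (Measurable.ennreal_tsum hmeas) hint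
    filter_upwards [this] with a ha
    exact ha.ne
  -- combine and slice
  have hslice : ∀ᵐ a : EuclideanSpace ℝ (Fin (Module.finrank ℝ ↥W)), volume {t : ℝ | F (a, t) ∈ K} = 0 := by
    filter_upwards [hG1, hG2, hG3] with a h1 h2 h3
    rw [hline] at h1
    have hTa : (∑' k : ℕ, Set.indicator
        {k' : ℕ | ((Set.range fun t : ℝ => g a + t • u) ∩ closure (Ω k')).Nonempty}
        (fun k' => ENNReal.ofReal (Metric.diam (Ω k'))) (k + 1)) ≠ ⊤ := by
      have hptwise : ∀ j : ℕ, Set.indicator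
          {k' : ℕ | ((Set.range fun t : ℝ => g a + t • u) ∩ closure (Ω k')).Nonempty}
          (fun k' => ENNReal.ofReal (Metric.diam (Ω k'))) j
          = Set.indicator (A j) (fun _ => ENNReal.ofReal (Metric.diam (Ω j))) a := by
        intro j
        by_cases hmem : a ∈ A j
        · rw [Set.indicator_of_mem hmem]
          obtain ⟨t, ht⟩ := hmem
          have : j ∈ {k' : ℕ | ((Set.range fun t : ℝ => g a + t • u) ∩ closure (Ω k')).Nonempty} :=
            ⟨g a + t • u, ⟨t, rfl⟩, by rwa [hFg] at ht⟩
          rw [Set.indicator_of_mem this]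
        · rw [Set.indicator_of_notMem hmem]
          have : j ∉ {k' : ℕ | ((Set.range fun t : ℝ => g a + t • u) ∩ closure (Ω k')).Nonempty} := by
            rintro ⟨x, ⟨t, rfl⟩, hx⟩
            exact hmem ⟨t, by rwa [hFg]⟩
          rw [Set.indicator_of_notMem this]
      rw [tsum_congr (fun k => hptwise (k + 1))]
      exact h3
    have happ := line_null K Ω hΩopen hΩdisj hK.bounded hK.compact.isClosed x₀ r hKb
      u (g a) hu h1 (fun k => h2 k) hTa
    exact happ
  -- Fubini
  have hKm : MeasurableSet K := hK.compact.isClosed.measurableSet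
  have hvolK : volume K = ∫⁻ a, volume {t : ℝ | F (a, t) ∈ K} ∂volume := by
    rw [← hFmp.measure_preimage hKm.nullMeasurableSet, Measure.volume_eq_prod,
      Measure.prod_apply (hKm.preimage hFmp.measurable)]
    rfl
  rw [hvolK]
  rw [lintegral_congr_ae (hslice.mono fun a ha => ha)]
  simp
end

section
/- Let D ⊆ ℝⁿ be an (α,c)-Hölder domain with basepoint x₀, let W(D) be a Whitney decomposition of D, and fix β > 0. Then there exists a constant C depending only on α, c, n, β such that for every quasihyperbolic geodesic γ starting at x₀, Σ_{Q ∈ W(D), Q ∩ γ ≠ ∅} ℓ(Q)^β ≤ C · δ_D(x₀)^β. -/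
open MeasureTheory Metric Set Filter
open scoped ENNReal NNReal Topology

/-- The distance `δ_D(x)` of `x` to the boundary of `D`. -/
noncomputable def distBoundary {n : ℕ} (D : Set (EuclideanSpace ℝ (Fin n)))
    (x : EuclideanSpace ℝ (Fin n)) : ℝ :=
  Metric.infDist x (frontier D)

/-- The quasihyperbolic distance between two points of `D`: the infimum, over all rectifiable
paths in `D` joining `x` to `y` (parametrized by arclength, i.e. `1`-Lipschitz on `[0, L]`),
of the arclength integral of `1 / δ_D` along the path. -/
noncomputable def qhDist {n : ℕ} (D : Set (EuclideanSpace ℝ (Fin n)))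
    (x y : EuclideanSpace ℝ (Fin n)) : ℝ≥0∞ :=
  ⨅ (L : ℝ) (γ : ℝ → EuclideanSpace ℝ (Fin n)) (_ : 0 ≤ L)
    (_ : LipschitzOnWith 1 γ (Icc 0 L)) (_ : γ 0 = x) (_ : γ L = y)
    (_ : γ '' Icc 0 L ⊆ D),
    ∫⁻ t in Icc 0 L, ENNReal.ofReal (1 / distBoundary D (γ t))

/-- `D` is an `(α, c)`-Hölder domain with basepoint `x₀`: `D` is open, `x₀ ∈ D`,
`α ∈ (0, 1]`, `c > 0`, and `k_D(x, x₀) ≤ (1/α) log (δ_D(x₀) / δ_D(x)) + c` for all `x ∈ D`. -/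
structure IsHolderDomain {n : ℕ} (D : Set (EuclideanSpace ℝ (Fin n))) (α c : ℝ)
    (x₀ : EuclideanSpace ℝ (Fin n)) : Prop where
  isOpen : IsOpen D
  basepoint_mem : x₀ ∈ D
  alpha_pos : 0 < α
  alpha_le_one : α ≤ 1
  c_pos : 0 < c
  qh_bound : ∀ x ∈ D, qhDist D x x₀ ≤
    ENNReal.ofReal ((1 / α) * Real.log (distBoundary D x₀ / distBoundary D x) + c)

/-- A quasihyperbolic geodesic in `D`, parametrized by arclength on `[0, L]`: a `1`-Lipschitz
curve in `D` such that for any two points on the curve their quasihyperbolic distance equals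
the integral of `1 / δ_D` over the subpath between them. -/
structure IsQHGeodesic {n : ℕ} (D : Set (EuclideanSpace ℝ (Fin n))) (L : ℝ)
    (γ : ℝ → EuclideanSpace ℝ (Fin n)) : Prop where
  nonneg : 0 ≤ L
  lipschitz : LipschitzOnWith 1 γ (Icc 0 L)
  mem : γ '' Icc 0 L ⊆ D
  geodesic : ∀ s ∈ Icc 0 L, ∀ t ∈ Icc 0 L, s ≤ t →
    qhDist D (γ s) (γ t) = ∫⁻ u in Icc s t, ENNReal.ofReal (1 / distBoundary D (γ u))

/-- A closed dyadic cube in `ℝⁿ`, determined by a scale `j ∈ ℤ` (the sidelength is `2 ^ j`)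
and a corner `m ∈ ℤⁿ`. -/
structure DyadicCube (n : ℕ) where
  j : ℤ
  m : Fin n → ℤ

/-- The sidelength `ℓ(Q) = 2 ^ j` of a dyadic cube. -/
noncomputable def DyadicCube.len {n : ℕ} (Q : DyadicCube n) : ℝ := 2 ^ Q.j

/-- The dyadic cube `Q`, as a subset of `ℝⁿ`. -/
def DyadicCube.set {n : ℕ} (Q : DyadicCube n) : Set (EuclideanSpace ℝ (Fin n)) :=
  {x | ∀ i : Fin n, (Q.m i : ℝ) * 2 ^ Q.j ≤ x i ∧ x i ≤ ((Q.m i : ℝ) + 1) * 2 ^ Q.j}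

/-- A face of a dyadic cube: the points of the cube whose `i`-th coordinate is extremal
(the top one if `top = true`, the bottom one otherwise). -/
def DyadicCube.face {n : ℕ} (Q : DyadicCube n) (i : Fin n) (top : Bool) :
    Set (EuclideanSpace ℝ (Fin n)) :=
  {x ∈ Q.set | x i = (if top then (Q.m i : ℝ) + 1 else (Q.m i : ℝ)) * 2 ^ Q.j}

/-- Two cubes are adjacent if a face of the smaller one is contained in a face of the
larger one. -/
def DyadicCube.Adjacent {n : ℕ} (Q₁ Q₂ : DyadicCube n) : Prop :=
  (Q₂.len ≤ Q₁.len ∧ ∃ i b i' b', Q₂.face i b ⊆ Q₁.face i' b') ∨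
  (Q₁.len ≤ Q₂.len ∧ ∃ i b i' b', Q₁.face i b ⊆ Q₂.face i' b')

/-- A (refined) Whitney decomposition of an open set `D`: a family of closed dyadic cubes
contained in `D`, with pairwise disjoint interiors, covering `D`, whose sidelengths are
comparable (with dimensional constants) to the distance to the boundary, such that the
sidelengths of intersecting cubes differ by a factor of at most `4`, and such that the
quasihyperbolic diameter of each cube is at most `1/3`. -/
structure IsWhitneyDecomposition (n : ℕ) (D : Set (EuclideanSpace ℝ (Fin n)))
    (W : Set (DyadicCube n)) : Prop where
  subset : ∀ Q ∈ W, Q.set ⊆ D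
  covers : D = ⋃ Q ∈ W, Q.set
  disjoint_interiors : ∀ Q₁ ∈ W, ∀ Q₂ ∈ W, Q₁ ≠ Q₂ →
    interior Q₁.set ∩ interior Q₂.set = ∅
  comparable : ∀ Q ∈ W, ∀ x ∈ Q.set,
    Q.len ≤ distBoundary D x ∧ distBoundary D x ≤ 6 * Real.sqrt n * Q.len
  len_ratio : ∀ Q₁ ∈ W, ∀ Q₂ ∈ W, (Q₁.set ∩ Q₂.set).Nonempty → Q₁.len ≤ 4 * Q₂.len
  qh_small : ∀ Q ∈ W, ∀ x₁ ∈ Q.set, ∀ x₂ ∈ Q.set, qhDist D x₁ x₂ ≤ ENNReal.ofReal (1 / 3)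

instance {n : ℕ} : Countable (DyadicCube n) := by
  have h : Function.Injective (fun Q : DyadicCube n => (Q.j, Q.m)) := by
    rintro ⟨j, m⟩ ⟨j', m'⟩ h
    simpa [DyadicCube.mk.injEq, Prod.ext_iff] using h
  exact h.countable

lemma DyadicCube.len_pos {n : ℕ} (Q : DyadicCube n) : 0 < Q.len := by
  have : (0:ℝ) < 2 ^ Q.j := zpow_pos (by norm_num) _
  simpa [DyadicCube.len] using this

lemma DyadicCube.dist_le {n : ℕ} (Q : DyadicCube n) {x y : EuclideanSpace ℝ (Fin n)}
    (hx : x ∈ Q.set) (hy : y ∈ Q.set) : dist x y ≤ Real.sqrt n * Q.len := by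
  rw [EuclideanSpace.dist_eq]
  have h : ∀ i : Fin n, dist (x i) (y i) ^ 2 ≤ Q.len ^ 2 := by
    intro i
    have hx' := hx i; have hy' := hy i
    have habs : |x i - y i| ≤ Q.len := by
      rw [abs_le]; unfold DyadicCube.len; constructor <;> nlinarith [hx'.1, hx'.2, hy'.1, hy'.2]
    rw [Real.dist_eq]
    nlinarith [abs_nonneg (x i - y i), Q.len_pos]
  calc Real.sqrt (∑ i, dist (x i) (y i)^2) ≤ Real.sqrt (∑ _i : Fin n, Q.len ^ 2) :=
        Real.sqrt_le_sqrt (Finset.sum_le_sum fun i _ => h i)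
    _ = Real.sqrt n * Q.len := by
        rw [Finset.sum_const, Finset.card_univ, Fintype.card_fin, nsmul_eq_mul,
          Real.sqrt_mul (by positivity), Real.sqrt_sq Q.len_pos.le]

lemma DyadicCube.isClosed_set {n : ℕ} (Q : DyadicCube n) : IsClosed Q.set := by
  have : Q.set = ⋂ i : Fin n, ((EuclideanSpace.proj (𝕜 := ℝ) i) ⁻¹'
      Icc ((Q.m i : ℝ) * 2 ^ Q.j) (((Q.m i : ℝ) + 1) * 2 ^ Q.j)) := by
    ext x; simp [DyadicCube.set, Set.mem_iInter, forall_and]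
  rw [this]
  exact isClosed_iInter fun i => IsClosed.preimage (EuclideanSpace.proj i).continuous isClosed_Icc

lemma DyadicCube.volume_le {n : ℕ} (Q : DyadicCube n) :
    ENNReal.ofReal (Q.len ^ n) ≤ volume (interior Q.set) := by
  set lo : Fin n → ℝ := fun i => (Q.m i : ℝ) * 2 ^ Q.j
  set hi : Fin n → ℝ := fun i => ((Q.m i : ℝ) + 1) * 2 ^ Q.j
  have hsub : (MeasurableEquiv.toLp 2 (Fin n → ℝ)).symm ⁻¹'
      (Set.pi univ fun i => Ioo (lo i) (hi i)) ⊆ Q.set := by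
    intro x hx i
    have := hx i (Set.mem_univ i)
    exact ⟨this.1.le, this.2.le⟩
  have hopen : IsOpen ((MeasurableEquiv.toLp 2 (Fin n → ℝ)).symm ⁻¹'
      (Set.pi univ fun i => Ioo (lo i) (hi i))) := by
    have : Continuous (fun x : EuclideanSpace ℝ (Fin n) => (MeasurableEquiv.toLp 2 (Fin n → ℝ)).symm x) := by
      exact (PiLp.continuous_ofLp 2 _)
    exact (isOpen_set_pi Set.finite_univ (fun i _ => isOpen_Ioo)).preimage this
  have hmeas : volume ((MeasurableEquiv.toLp 2 (Fin n → ℝ)).symm ⁻¹'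
      (Set.pi univ fun i => Ioo (lo i) (hi i))) = ENNReal.ofReal (Q.len ^ n) := by
    rw [(EuclideanSpace.volume_preserving_symm_measurableEquiv_toLp (Fin n)).measure_preimage
      (MeasurableSet.univ_pi fun i => measurableSet_Ioo).nullMeasurableSet]
    rw [volume_pi_pi]
    have : ∀ i : Fin n, volume (Ioo (lo i) (hi i)) = ENNReal.ofReal Q.len := by
      intro i
      rw [Real.volume_Ioo]
      congr 1
      simp only [lo, hi, DyadicCube.len]; ring
    simp only [this, Finset.prod_const, Finset.card_univ, Fintype.card_fin]
    rw [← ENNReal.ofReal_pow Q.len_pos.le]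
  calc ENNReal.ofReal (Q.len ^ n) = _ := hmeas.symm
    _ ≤ volume (interior Q.set) := measure_mono (interior_maximal hsub hopen)

lemma distBoundary_pos {n : ℕ} {D : Set (EuclideanSpace ℝ (Fin n))} (hD : IsOpen D)
    (hfr : (frontier D).Nonempty) {x : EuclideanSpace ℝ (Fin n)} (hx : x ∈ D) :
    0 < distBoundary D x := by
  rw [distBoundary, ← isClosed_frontier.notMem_iff_infDist_pos hfr]
  intro h
  rw [← hD.interior_eq] at hx
  exact h.2 hx

lemma distBoundary_lipschitz {n : ℕ} (D : Set (EuclideanSpace ℝ (Fin n)))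
    (x y : EuclideanSpace ℝ (Fin n)) :
    distBoundary D x ≤ distBoundary D y + dist x y :=
  Metric.infDist_le_infDist_add_dist


-- interval lintegral computation
lemma key_integral₁ {A a b : ℝ} (hA : 0 < A) (hab : a ≤ b) :
    ∫⁻ u in Icc a b, ENNReal.ofReal ((A + (u - a))⁻¹) =
      ENNReal.ofReal (Real.log ((A + (b - a)) / A)) := by
  have hcont : ContinuousOn (fun u : ℝ => (A + (u - a))⁻¹) (Icc a b) := by
    apply ContinuousOn.inv₀ (by fun_prop)
    intro u hu; nlinarith [hu.1]
  have hint : IntegrableOn (fun u : ℝ => (A + (u - a))⁻¹) (Icc a b) :=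
    hcont.integrableOn_Icc
  rw [← MeasureTheory.ofReal_integral_eq_lintegral_ofReal hint ?nn]
  case nn =>
    filter_upwards [ae_restrict_mem measurableSet_Icc] with u hu
    have : (0:ℝ) < A + (u - a) := by nlinarith [hu.1]
    positivity
  congr 1
  rw [MeasureTheory.integral_Icc_eq_integral_Ioc, ← intervalIntegral.integral_of_le hab]
  have : ∀ u : ℝ, (A + (u - a))⁻¹ = (u + (A - a))⁻¹ := by intro u; ring_nf
  simp_rw [this]
  rw [intervalIntegral.integral_comp_add_right (fun v => v⁻¹) (A - a)]
  have h1 : a + (A - a) = A := by ring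
  have h2 : b + (A - a) = A + (b - a) := by ring
  rw [h1, h2, integral_inv_of_pos hA (by linarith)]

lemma key_integral₂ {A a b : ℝ} (hA : 0 < A) (hab : a ≤ b) :
    ∫⁻ u in Icc a b, ENNReal.ofReal ((A + (b - u))⁻¹) =
      ENNReal.ofReal (Real.log ((A + (b - a)) / A)) := by
  have hcont : ContinuousOn (fun u : ℝ => (A + (b - u))⁻¹) (Icc a b) := by
    apply ContinuousOn.inv₀ (by fun_prop)
    intro u hu; nlinarith [hu.2]
  have hint : IntegrableOn (fun u : ℝ => (A + (b - u))⁻¹) (Icc a b) :=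
    hcont.integrableOn_Icc
  rw [← MeasureTheory.ofReal_integral_eq_lintegral_ofReal hint ?nn]
  case nn =>
    filter_upwards [ae_restrict_mem measurableSet_Icc] with u hu
    have : (0:ℝ) < A + (b - u) := by nlinarith [hu.2]
    positivity
  congr 1
  rw [MeasureTheory.integral_Icc_eq_integral_Ioc, ← intervalIntegral.integral_of_le hab]
  have : ∀ u : ℝ, (A + (b - u))⁻¹ = ((A + b) - u)⁻¹ := by intro u; ring_nf
  simp_rw [this]
  rw [intervalIntegral.integral_comp_sub_left (fun v => v⁻¹) (A + b)]
  have h1 : A + b - b = A := by ring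
  have h2 : A + b - a = A + (b - a) := by ring
  rw [h1, h2, integral_inv_of_pos hA (by linarith)]

-- Gronwall-type estimate along a 1-Lipschitz path
lemma gronwall₁ {n : ℕ} {D : Set (EuclideanSpace ℝ (Fin n))} (hD : IsOpen D)
    (hfr : (frontier D).Nonempty) {a b : ℝ} (hab : a ≤ b)
    {γ : ℝ → EuclideanSpace ℝ (Fin n)} (hlip : LipschitzOnWith 1 γ (Icc a b))
    (him : γ '' Icc a b ⊆ D) :
    ENNReal.ofReal (Real.log (distBoundary D (γ b) / distBoundary D (γ a))) ≤
      ∫⁻ u in Icc a b, ENNReal.ofReal (1 / distBoundary D (γ u)) := by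
  have ha : a ∈ Icc a b := ⟨le_refl a, hab⟩
  have hb : b ∈ Icc a b := ⟨hab, le_refl b⟩
  set A := distBoundary D (γ a) with hA
  have hApos : 0 < A := distBoundary_pos hD hfr (him ⟨a, ha, rfl⟩)
  have hub : ∀ u ∈ Icc a b, distBoundary D (γ u) ≤ A + (u - a) := by
    intro u hu
    have hd : dist (γ u) (γ a) ≤ u - a := by
      have h1 := hlip.dist_le_mul u hu a ha
      simp only [NNReal.coe_one, one_mul, Real.dist_eq] at h1
      calc dist (γ u) (γ a) ≤ |u - a| := h1
        _ = u - a := abs_of_nonneg (by linarith [hu.1])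
    calc distBoundary D (γ u) ≤ distBoundary D (γ a) + dist (γ u) (γ a) :=
          distBoundary_lipschitz D _ _
      _ ≤ A + (u - a) := by rw [hA]; linarith
  have hmono : ∫⁻ u in Icc a b, ENNReal.ofReal ((A + (u - a))⁻¹) ≤
      ∫⁻ u in Icc a b, ENNReal.ofReal (1 / distBoundary D (γ u)) := by
    apply lintegral_mono_ae
    filter_upwards [ae_restrict_mem measurableSet_Icc] with u hu
    rw [one_div]
    apply ENNReal.ofReal_le_ofReal
    apply inv_anti₀ (distBoundary_pos hD hfr (him ⟨u, hu, rfl⟩)) (hub u hu)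
  refine le_trans ?_ (le_trans (le_of_eq (key_integral₁ hApos hab).symm) hmono)
  apply ENNReal.ofReal_le_ofReal
  have hBpos : 0 < distBoundary D (γ b) := distBoundary_pos hD hfr (him ⟨b, hb, rfl⟩)
  exact Real.log_le_log (by positivity) ((div_le_div_iff_of_pos_right hApos).mpr (hub b hb))

lemma gronwall₂ {n : ℕ} {D : Set (EuclideanSpace ℝ (Fin n))} (hD : IsOpen D)
    (hfr : (frontier D).Nonempty) {a b : ℝ} (hab : a ≤ b)
    {γ : ℝ → EuclideanSpace ℝ (Fin n)} (hlip : LipschitzOnWith 1 γ (Icc a b))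
    (him : γ '' Icc a b ⊆ D) :
    ENNReal.ofReal (Real.log (distBoundary D (γ a) / distBoundary D (γ b))) ≤
      ∫⁻ u in Icc a b, ENNReal.ofReal (1 / distBoundary D (γ u)) := by
  have ha : a ∈ Icc a b := ⟨le_refl a, hab⟩
  have hb : b ∈ Icc a b := ⟨hab, le_refl b⟩
  set A := distBoundary D (γ b) with hA
  have hApos : 0 < A := distBoundary_pos hD hfr (him ⟨b, hb, rfl⟩)
  have hub : ∀ u ∈ Icc a b, distBoundary D (γ u) ≤ A + (b - u) := by
    intro u hu
    have hd : dist (γ u) (γ b) ≤ b - u := by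
      have h1 := hlip.dist_le_mul u hu b hb
      simp only [NNReal.coe_one, one_mul, Real.dist_eq] at h1
      calc dist (γ u) (γ b) ≤ |u - b| := h1
        _ = b - u := by rw [abs_sub_comm]; exact abs_of_nonneg (by linarith [hu.2])
    calc distBoundary D (γ u) ≤ distBoundary D (γ b) + dist (γ u) (γ b) :=
          distBoundary_lipschitz D _ _
      _ ≤ A + (b - u) := by rw [hA]; linarith
  have hmono : ∫⁻ u in Icc a b, ENNReal.ofReal ((A + (b - u))⁻¹) ≤
      ∫⁻ u in Icc a b, ENNReal.ofReal (1 / distBoundary D (γ u)) := by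
    apply lintegral_mono_ae
    filter_upwards [ae_restrict_mem measurableSet_Icc] with u hu
    rw [one_div]
    apply ENNReal.ofReal_le_ofReal
    apply inv_anti₀ (distBoundary_pos hD hfr (him ⟨u, hu, rfl⟩)) (hub u hu)
  refine le_trans ?_ (le_trans (le_of_eq (key_integral₂ hApos hab).symm) hmono)
  apply ENNReal.ofReal_le_ofReal
  have hBpos : 0 < distBoundary D (γ a) := distBoundary_pos hD hfr (him ⟨a, ha, rfl⟩)
  exact Real.log_le_log (by positivity) ((div_le_div_iff_of_pos_right hApos).mpr (hub a ha))

lemma qhDist_le {n : ℕ} {D : Set (EuclideanSpace ℝ (Fin n))}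
    {x y : EuclideanSpace ℝ (Fin n)} {L : ℝ} {γ : ℝ → EuclideanSpace ℝ (Fin n)}
    (h0 : 0 ≤ L) (hlip : LipschitzOnWith 1 γ (Icc 0 L)) (hx : γ 0 = x) (hy : γ L = y)
    (him : γ '' Icc 0 L ⊆ D) :
    qhDist D x y ≤ ∫⁻ t in Icc 0 L, ENNReal.ofReal (1 / distBoundary D (γ t)) := by
  unfold qhDist
  exact iInf_le_of_le L (iInf_le_of_le γ (iInf_le_of_le h0 (iInf_le_of_le hlip
    (iInf_le_of_le hx (iInf_le_of_le hy (iInf_le _ him))))))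

lemma le_qhDist {n : ℕ} {D : Set (EuclideanSpace ℝ (Fin n))}
    {x y : EuclideanSpace ℝ (Fin n)} {e : ℝ≥0∞}
    (h : ∀ (L : ℝ) (γ : ℝ → EuclideanSpace ℝ (Fin n)), 0 ≤ L →
      LipschitzOnWith 1 γ (Icc 0 L) → γ 0 = x → γ L = y → γ '' Icc 0 L ⊆ D →
      e ≤ ∫⁻ t in Icc 0 L, ENNReal.ofReal (1 / distBoundary D (γ t))) :
    e ≤ qhDist D x y := by
  unfold qhDist
  exact le_iInf fun L => le_iInf fun γ => le_iInf fun h0 => le_iInf fun hlip =>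
    le_iInf fun hx => le_iInf fun hy => le_iInf fun him => h L γ h0 hlip hx hy him

lemma log_ratio_le_qhDist {n : ℕ} {D : Set (EuclideanSpace ℝ (Fin n))} (hD : IsOpen D)
    (hfr : (frontier D).Nonempty) {x y : EuclideanSpace ℝ (Fin n)} :
    ENNReal.ofReal (Real.log (distBoundary D x / distBoundary D y)) ≤ qhDist D x y := by
  apply le_qhDist
  intro L γ h0 hlip hx hy him
  have := gronwall₂ hD hfr h0 hlip him
  rw [hx, hy] at this
  exact this

lemma qhDist_symm_le {n : ℕ} {D : Set (EuclideanSpace ℝ (Fin n))} (hD : IsOpen D)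
    (hfr : (frontier D).Nonempty) (x y : EuclideanSpace ℝ (Fin n)) :
    qhDist D x y ≤ qhDist D y x := by
  apply le_qhDist
  intro L γ h0 hlip hy hx him
  -- reversed path
  set γ' : ℝ → EuclideanSpace ℝ (Fin n) := fun t => γ (L - t) with hγ'
  have hmap : ∀ t ∈ Icc (0:ℝ) L, L - t ∈ Icc (0:ℝ) L := by
    intro t ht; exact ⟨by linarith [ht.2], by linarith [ht.1]⟩
  have hlip' : LipschitzOnWith 1 γ' (Icc 0 L) := by
    intro s hs t ht
    have := hlip.dist_le_mul (L - s) (hmap s hs) (L - t) (hmap t ht)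
    calc edist (γ' s) (γ' t) = edist (γ (L - s)) (γ (L - t)) := rfl
      _ ≤ 1 * edist (L - s) (L - t) := hlip (hmap s hs) (hmap t ht)
      _ = 1 * edist s t := by
          congr 1
          rw [edist_dist, edist_dist, Real.dist_eq, Real.dist_eq]
          congr 1
          rw [abs_sub_comm s t]
          congr 1
          ring
  have him' : γ' '' Icc 0 L ⊆ D := by
    rintro _ ⟨t, ht, rfl⟩
    exact him ⟨L - t, hmap t ht, rfl⟩
  have key : ∫⁻ t in Icc 0 L, ENNReal.ofReal (1 / distBoundary D (γ' t)) =
      ∫⁻ t in Icc 0 L, ENNReal.ofReal (1 / distBoundary D (γ t)) := by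
    have hmeasf : AEMeasurable (fun t => ENNReal.ofReal (1 / distBoundary D (γ t)))
        (volume.restrict (Icc 0 L)) := by
      have hcont : ContinuousOn (fun t => 1 / distBoundary D (γ t)) (Icc 0 L) := by
        apply ContinuousOn.div continuousOn_const
        · exact (lipschitz_infDist_pt (frontier D)).continuous.comp_continuousOn
            hlip.continuousOn
        · intro t ht
          exact (distBoundary_pos hD hfr (him ⟨t, ht, rfl⟩)).ne'
      exact ENNReal.measurable_ofReal.comp_aemeasurable
        (hcont.aemeasurable measurableSet_Icc)
    have hpre : (fun t : ℝ => L - t) ⁻¹' Icc 0 L = Icc 0 L := by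
      ext t; simp only [Set.mem_preimage, Set.mem_Icc]; constructor <;> intro h <;>
        constructor <;> linarith [h.1, h.2]
    have hmp : (volume.restrict (Icc (0:ℝ) L)).map (fun t => L - t) =
        volume.restrict (Icc 0 L) := by
      have h1 : (volume : Measure ℝ).map (fun t => L - t) = volume :=
        (Measure.measurePreserving_sub_left volume L).map_eq
      calc (volume.restrict (Icc (0:ℝ) L)).map (fun t => L - t)
          = ((volume : Measure ℝ).restrict ((fun t : ℝ => L - t) ⁻¹' Icc 0 L)).map
              (fun t => L - t) := by rw [hpre]
        _ = ((volume : Measure ℝ).map (fun t => L - t)).restrict (Icc 0 L) :=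
            (Measure.restrict_map (by fun_prop) measurableSet_Icc).symm
        _ = volume.restrict (Icc 0 L) := by rw [h1]
    calc ∫⁻ t in Icc 0 L, ENNReal.ofReal (1 / distBoundary D (γ' t))
        = ∫⁻ t, ENNReal.ofReal (1 / distBoundary D (γ (L - t))) ∂(volume.restrict (Icc 0 L)) := rfl
      _ = ∫⁻ t, ENNReal.ofReal (1 / distBoundary D (γ t))
            ∂((volume.restrict (Icc (0:ℝ) L)).map (fun t => L - t)) := by
          rw [lintegral_map' (by rw [hmp]; exact hmeasf) (by fun_prop)]
      _ = ∫⁻ t in Icc 0 L, ENNReal.ofReal (1 / distBoundary D (γ t)) := by rw [hmp]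
  rw [← key]
  apply qhDist_le h0 hlip' _ _ him'
  · show γ (L - 0) = x; rw [sub_zero, hx]
  · show γ (L - L) = y; rw [sub_self, hy]

lemma delta_le_of_holder {n : ℕ} {D : Set (EuclideanSpace ℝ (Fin n))} {α c : ℝ}
    {x₀ : EuclideanSpace ℝ (Fin n)} (h : IsHolderDomain D α c x₀)
    (hfr : (frontier D).Nonempty) {x : EuclideanSpace ℝ (Fin n)} (hx : x ∈ D) :
    distBoundary D x ≤ distBoundary D x₀ * Real.exp c := by
  have hδx : 0 < distBoundary D x := distBoundary_pos h.isOpen hfr hx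
  have hδ0 : 0 < distBoundary D x₀ := distBoundary_pos h.isOpen hfr h.basepoint_mem
  rcases le_or_gt (distBoundary D x) (distBoundary D x₀) with hle | hlt
  · calc distBoundary D x ≤ distBoundary D x₀ := hle
      _ ≤ distBoundary D x₀ * Real.exp c := by
          nlinarith [Real.one_le_exp h.c_pos.le, hδ0]
  · have h1 : ENNReal.ofReal (Real.log (distBoundary D x / distBoundary D x₀)) ≤
        ENNReal.ofReal ((1 / α) * Real.log (distBoundary D x₀ / distBoundary D x) + c) :=
      le_trans (log_ratio_le_qhDist h.isOpen hfr) (h.qh_bound x hx)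
    set u := Real.log (distBoundary D x / distBoundary D x₀) with hu
    have hupos : 0 < u := Real.log_pos (by rw [lt_div_iff₀ hδ0]; linarith)
    have hswap : Real.log (distBoundary D x₀ / distBoundary D x) = -u := by
      rw [hu, ← Real.log_inv]; congr 1; rw [inv_div]
    have h2 : u ≤ (1 / α) * (-u) + c := by
      rw [hswap] at h1
      have hBpos : 0 < (1 / α) * (-u) + c :=
        ENNReal.ofReal_pos.mp ((ENNReal.ofReal_pos.mpr hupos).trans_le h1)
      exact (ENNReal.ofReal_le_ofReal_iff hBpos.le).mp h1
    have hαpos := h.alpha_pos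
    have huc : u ≤ c := by nlinarith [mul_pos (one_div_pos.mpr hαpos) hupos]
    have : distBoundary D x / distBoundary D x₀ ≤ Real.exp c := by
      rw [← Real.exp_log (by positivity : (0:ℝ) < distBoundary D x / distBoundary D x₀)]
      exact Real.exp_le_exp.mpr huc
    rw [div_le_iff₀ hδ0] at this
    linarith [this]

lemma tsum_le_of_fiber_le {ι : Type*} (g : ι → ℝ≥0∞) (κ : ι → ℕ) (a b : ℝ≥0∞)
    (h : ∀ k : ℕ, ∑' i : {i : ι // κ i = k}, g i.1 ≤ a * b ^ k) :
    ∑' i, g i ≤ a * (1 - b)⁻¹ := by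
  have h1 : ∑' i, g i = ∑' p : Σ k : ℕ, {i : ι // κ i = k}, g p.2.1 :=
    ((Equiv.sigmaFiberEquiv κ).tsum_eq g).symm
  rw [h1, ENNReal.tsum_sigma']
  calc ∑' (k : ℕ) (i : {i : ι // κ i = k}), g i.1 ≤ ∑' k : ℕ, a * b ^ k :=
        ENNReal.tsum_le_tsum h
    _ = a * ∑' k : ℕ, b ^ k := ENNReal.tsum_mul_left
    _ = a * (1 - b)⁻¹ := by rw [ENNReal.tsum_geometric]


set_option maxHeartbeats 2000000 in
theorem statement7 (n : ℕ) (α c β : ℝ) (hβ : 0 < β) :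
    ∃ C : ℝ, 0 < C ∧
      ∀ (D : Set (EuclideanSpace ℝ (Fin n))) (x₀ : EuclideanSpace ℝ (Fin n))
        (W : Set (DyadicCube n)) (L : ℝ) (γ : ℝ → EuclideanSpace ℝ (Fin n)),
        IsHolderDomain D α c x₀ → IsWhitneyDecomposition n D W →
        IsQHGeodesic D L γ → γ 0 = x₀ →
        ∑' Q : {Q : DyadicCube n // Q ∈ W ∧ (Q.set ∩ γ '' Icc 0 L).Nonempty},
            ENNReal.ofReal ((Q : DyadicCube n).len ^ β) ≤
          ENNReal.ofReal (C * distBoundary D x₀ ^ β) := by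
  classical
  -- the constant
  set sqn := Real.sqrt n with hsqn_def
  set Vr := (volume (ball (0 : EuclideanSpace ℝ (Fin n)) 1)).toReal with hVr_def
  set K := max ((2:ℝ) ^ (β - (n:ℝ))) ((9 * sqn) ^ ((n:ℝ) - β)) with hK_def
  set r := Real.exp (-(α * β / 3)) with hr_def
  refine ⟨max 1 (K * Vr * (3 * sqn) ^ n * Real.exp (α * β * c) * (1 - r)⁻¹),
    lt_of_lt_of_le zero_lt_one (le_max_left _ _), ?_⟩
  intro D x₀ W L γ hHD hWD hG hγ0
  have hD := hHD.isOpen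
  -- degenerate case: empty frontier
  by_cases hfr : (frontier D).Nonempty
  swap
  · exfalso
    have hfr' : frontier D = ∅ := Set.not_nonempty_iff_eq_empty.mp hfr
    have hx₀ : x₀ ∈ ⋃ Q ∈ W, Q.set := hWD.covers ▸ hHD.basepoint_mem
    obtain ⟨Q, hQW, hx₀Q⟩ := by simpa using hx₀
    have h1 := (hWD.comparable Q hQW x₀ hx₀Q).1
    rw [distBoundary, hfr', Metric.infDist_empty] at h1
    exact absurd h1 (not_le.mpr Q.len_pos)
  -- n ≥ 1
  have hn1 : 1 ≤ n := by
    by_contra hn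
    have hn0 : n = 0 := by omega
    subst hn0
    obtain ⟨y, hy⟩ := hfr
    have hyx : y = x₀ := PiLp.ext fun i => Fin.elim0 i
    rw [← hD.interior_eq] at hHD
    exact hy.2 (hyx ▸ hHD.basepoint_mem)
  have hsqn1 : (1:ℝ) ≤ sqn := by
    rw [hsqn_def, show (1:ℝ) = Real.sqrt 1 by rw [Real.sqrt_one]]
    exact Real.sqrt_le_sqrt (by exact_mod_cast hn1)
  -- basic facts
  have hδ0 : 0 < distBoundary D x₀ := distBoundary_pos hD hfr hHD.basepoint_mem
  set δ₀ := distBoundary D x₀ with hδ₀_def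
  have hα := hHD.alpha_pos
  have hc := hHD.c_pos
  set M := δ₀ * Real.exp c with hM_def
  have hMpos : 0 < M := by positivity
  have hM : ∀ x ∈ D, distBoundary D x ≤ M := fun x hx => delta_le_of_holder hHD hfr hx
  have hδpos : ∀ t ∈ Icc (0:ℝ) L, 0 < distBoundary D (γ t) :=
    fun t ht => distBoundary_pos hD hfr (hG.mem ⟨t, ht, rfl⟩)
  -- the quasihyperbolic length function along the geodesic
  set F : ℝ → ℝ≥0∞ := fun t => ∫⁻ u in Icc 0 t, ENNReal.ofReal (1 / distBoundary D (γ u))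
    with hF_def
  -- additivity of F
  have hF_add : ∀ s t : ℝ, 0 ≤ s → s ≤ t →
      F t = F s + ∫⁻ u in Icc s t, ENNReal.ofReal (1 / distBoundary D (γ u)) := by
    intro s t h0s hst
    have hres : (volume : Measure ℝ).restrict (Ioc s t) = volume.restrict (Icc s t) :=
      Measure.restrict_congr_set Ioc_ae_eq_Icc
    have hsplit : Icc (0:ℝ) t = Icc 0 s ∪ Ioc s t := (Set.Icc_union_Ioc_eq_Icc h0s hst).symm
    rw [hF_def]
    simp only
    rw [hsplit, lintegral_union measurableSet_Ioc ((Set.Iic_disjoint_Ioc (le_refl s)).mono_left Set.Icc_subset_Iic_self)]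
    congr 1
    rw [hres]
  -- F t equals the qh distance from the basepoint
  have hF_eq : ∀ t ∈ Icc (0:ℝ) L, qhDist D x₀ (γ t) = F t := by
    intro t ht
    have := hG.geodesic 0 ⟨le_refl 0, ht.1.trans ht.2⟩ t ht ht.1
    rw [hγ0] at this
    exact this
  -- upper bound on F from the Hölder condition
  have hF_le : ∀ t ∈ Icc (0:ℝ) L, F t ≤
      ENNReal.ofReal ((1 / α) * Real.log (δ₀ / distBoundary D (γ t)) + c) := by
    intro t ht
    rw [← hF_eq t ht]
    exact le_trans (qhDist_symm_le hD hfr x₀ (γ t)) (hHD.qh_bound (γ t) (hG.mem ⟨t, ht, rfl⟩))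
  have hF_ne_top : ∀ t ∈ Icc (0:ℝ) L, F t ≠ ⊤ :=
    fun t ht => (lt_of_le_of_lt (hF_le t ht) ENNReal.ofReal_lt_top).ne
  -- lower bound on F
  have hF_ge : ∀ t ∈ Icc (0:ℝ) L, ENNReal.ofReal (t / M) ≤ F t := by
    intro t ht
    have hconst : ∀ u ∈ Icc (0:ℝ) t, ENNReal.ofReal (1 / M) ≤
        ENNReal.ofReal (1 / distBoundary D (γ u)) := by
      intro u hu
      have huL : u ∈ Icc (0:ℝ) L := ⟨hu.1, hu.2.trans ht.2⟩
      apply ENNReal.ofReal_le_ofReal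
      rw [one_div, one_div]
      exact inv_anti₀ (hδpos u huL) (hM _ (hG.mem ⟨u, huL, rfl⟩))
    calc ENNReal.ofReal (t / M) = ENNReal.ofReal (1 / M) * volume (Icc (0:ℝ) t) := by
          rw [Real.volume_Icc, sub_zero, ← ENNReal.ofReal_mul (by positivity)]
          congr 1; field_simp
      _ = ∫⁻ _ in Icc (0:ℝ) t, ENNReal.ofReal (1 / M) := (setLIntegral_const _ _).symm
      _ ≤ F t := by
          rw [hF_def]
          exact lintegral_mono_ae ((ae_restrict_iff' measurableSet_Icc).mpr
            (Filter.Eventually.of_forall hconst))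
  -- decay of δ along the geodesic
  have hF5 : ∀ t ∈ Icc (0:ℝ) L, distBoundary D (γ t) ≤
      δ₀ * Real.exp (α * c) * Real.exp (-α * (F t).toReal) := by
    intro t ht
    rcases eq_or_lt_of_le ht.1 with h0t | h0t
    · have hF0 : F t = 0 := by
        rw [hF_def]; simp only
        rw [← h0t]
        have : volume (Icc (0:ℝ) 0) = 0 := by simp
        rw [Measure.restrict_eq_zero.mpr this, lintegral_zero_measure]
      rw [hF0, ← h0t, hγ0]
      simp only [ENNReal.toReal_zero, mul_zero, neg_zero, Real.exp_zero, mul_one]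
      nlinarith [Real.one_le_exp (show (0:ℝ) ≤ α * c by positivity), hδ0]
    · have hFpos : 0 < F t := lt_of_lt_of_le (ENNReal.ofReal_pos.mpr (by positivity)) (hF_ge t ht)
      set B := (1 / α) * Real.log (δ₀ / distBoundary D (γ t)) + c with hB_def
      have hBpos : 0 < B := ENNReal.ofReal_pos.mp (lt_of_lt_of_le hFpos (hF_le t ht))
      have hu : (F t).toReal ≤ B := ENNReal.toReal_le_of_le_ofReal hBpos.le (hF_le t ht)
      have hδt := hδpos t ht
      have hlog : Real.log (δ₀ / distBoundary D (γ t)) =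
          Real.log δ₀ - Real.log (distBoundary D (γ t)) := Real.log_div hδ0.ne' hδt.ne'
      have h2 : α * (F t).toReal ≤ Real.log δ₀ - Real.log (distBoundary D (γ t)) + α * c := by
        have h1 := mul_le_mul_of_nonneg_left hu hα.le
        rw [hB_def, hlog] at h1
        have hαα : α * ((1 / α) * (Real.log δ₀ - Real.log (distBoundary D (γ t))) + c) =
            Real.log δ₀ - Real.log (distBoundary D (γ t)) + α * c := by
          field_simp
        linarith [hαα ▸ h1]
      have h3 : Real.log (distBoundary D (γ t)) ≤
          Real.log δ₀ + α * c + (-α * (F t).toReal) := by nlinarith [h2]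
      calc distBoundary D (γ t) = Real.exp (Real.log (distBoundary D (γ t))) :=
            (Real.exp_log hδt).symm
        _ ≤ Real.exp (Real.log δ₀ + α * c + (-α * (F t).toReal)) := Real.exp_le_exp.mpr h3
        _ = δ₀ * Real.exp (α * c) * Real.exp (-α * (F t).toReal) := by
            rw [Real.exp_add, Real.exp_add, Real.exp_log hδ0]
  -- exp(1/3) ≤ 3/2
  have hexp13 : Real.exp (1/3 : ℝ) ≤ 3/2 := by
    have h1 : (2:ℝ)/3 ≤ Real.exp (-(1/3 : ℝ)) := by
      have := Real.add_one_le_exp (-(1/3) : ℝ); linarith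
    have h2 : Real.exp (1/3 : ℝ) * Real.exp (-(1/3) : ℝ) = 1 := by
      rw [← Real.exp_add]; norm_num
    nlinarith [Real.exp_pos (1/3 : ℝ), Real.exp_pos (-(1/3) : ℝ)]
  -- comparability of δ at quasihyperbolically close times
  have hvar : ∀ s t : ℝ, s ∈ Icc (0:ℝ) L → t ∈ Icc (0:ℝ) L → s ≤ t →
      (F t).toReal - (F s).toReal ≤ 1/3 →
      distBoundary D (γ t) ≤ (3/2) * distBoundary D (γ s) ∧
      distBoundary D (γ s) ≤ (3/2) * distBoundary D (γ t) := by
    intro s t hs ht hst hdiff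
    set Ivl := ∫⁻ u in Icc s t, ENNReal.ofReal (1 / distBoundary D (γ u)) with hIvl_def
    have hsum : F t = F s + Ivl := hF_add s t hs.1 hst
    have hIvl_ne : Ivl ≠ ⊤ := by
      intro htop
      exact hF_ne_top t ht (by rw [hsum, htop]; simp)
    have htoReal : (F t).toReal = (F s).toReal + Ivl.toReal := by
      rw [hsum, ENNReal.toReal_add (hF_ne_top s hs) hIvl_ne]
    have hIvl_le : Ivl ≤ ENNReal.ofReal (1/3) := by
      rw [← ENNReal.ofReal_toReal hIvl_ne]
      exact ENNReal.ofReal_le_ofReal (by linarith)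
    have hlip' : LipschitzOnWith 1 γ (Icc s t) :=
      hG.lipschitz.mono (Set.Icc_subset_Icc hs.1 ht.2)
    have him' : γ '' Icc s t ⊆ D :=
      subset_trans (Set.image_mono (Set.Icc_subset_Icc hs.1 ht.2)) hG.mem
    have hδs := hδpos s hs
    have hδt := hδpos t ht
    constructor
    · have g1 := le_trans (gronwall₁ hD hfr hst hlip' him') hIvl_le
      have hlog : Real.log (distBoundary D (γ t) / distBoundary D (γ s)) ≤ 1/3 :=
        (ENNReal.ofReal_le_ofReal_iff (by norm_num)).mp g1
      have hratio : distBoundary D (γ t) / distBoundary D (γ s) ≤ Real.exp (1/3 : ℝ) :=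
        (Real.log_le_iff_le_exp (by positivity)).mp hlog
      have := le_trans hratio hexp13
      rw [div_le_iff₀ hδs] at this
      linarith
    · have g2 := le_trans (gronwall₂ hD hfr hst hlip' him') hIvl_le
      have hlog : Real.log (distBoundary D (γ s) / distBoundary D (γ t)) ≤ 1/3 :=
        (ENNReal.ofReal_le_ofReal_iff (by norm_num)).mp g2
      have hratio : distBoundary D (γ s) / distBoundary D (γ t) ≤ Real.exp (1/3 : ℝ) :=
        (Real.log_le_iff_le_exp (by positivity)).mp hlog
      have := le_trans hratio hexp13
      rw [div_le_iff₀ hδt] at this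
      linarith
  -- monotonicity of (F ·).toReal
  have hFmono : ∀ s t : ℝ, 0 ≤ s → s ≤ t → t ≤ L → (F s).toReal ≤ (F t).toReal := by
    intro s t h0s hst htL
    have hsum : F t = F s + _ := hF_add s t h0s hst
    have hIvl_ne : (∫⁻ u in Icc s t, ENNReal.ofReal (1 / distBoundary D (γ u))) ≠ ⊤ := by
      intro htop
      exact hF_ne_top t ⟨h0s.trans hst, htL⟩ (by rw [hsum, htop]; simp)
    rw [hsum, ENNReal.toReal_add (hF_ne_top s ⟨h0s, hst.trans htL⟩) hIvl_ne]
    exact le_add_of_nonneg_right ENNReal.toReal_nonneg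
  -- time difference bound at quasihyperbolically close times
  have hband : ∀ s t : ℝ, s ∈ Icc (0:ℝ) L → t ∈ Icc (0:ℝ) L → s ≤ t →
      (F t).toReal - (F s).toReal ≤ 1/3 → t - s ≤ distBoundary D (γ s) / 2 := by
    intro s t hs ht hst hdiff
    set Ivl := ∫⁻ u in Icc s t, ENNReal.ofReal (1 / distBoundary D (γ u)) with hIvl_def
    have hsum : F t = F s + Ivl := hF_add s t hs.1 hst
    have hIvl_ne : Ivl ≠ ⊤ := by
      intro htop
      exact hF_ne_top t ht (by rw [hsum, htop]; simp)
    have htoReal : (F t).toReal = (F s).toReal + Ivl.toReal := by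
      rw [hsum, ENNReal.toReal_add (hF_ne_top s hs) hIvl_ne]
    have hIvl_le : Ivl ≤ ENNReal.ofReal (1/3) := by
      rw [← ENNReal.ofReal_toReal hIvl_ne]
      exact ENNReal.ofReal_le_ofReal (by linarith)
    have hδs := hδpos s hs
    have hub : ∀ u ∈ Icc s t, distBoundary D (γ u) ≤ (3/2) * distBoundary D (γ s) := by
      intro u hu
      have huL : u ∈ Icc (0:ℝ) L := ⟨hs.1.trans hu.1, hu.2.trans ht.2⟩
      have hd1 : (F u).toReal - (F s).toReal ≤ 1/3 := by
        have := hFmono u t huL.1 hu.2 ht.2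
        linarith
      exact (hvar s u hs huL hu.1 hd1).1
    have hlow : ENNReal.ofReal ((t - s) * ((3/2) * distBoundary D (γ s))⁻¹) ≤ Ivl := by
      calc ENNReal.ofReal ((t - s) * ((3/2) * distBoundary D (γ s))⁻¹)
          = ENNReal.ofReal (((3/2) * distBoundary D (γ s))⁻¹) * volume (Icc s t) := by
            rw [Real.volume_Icc, ← ENNReal.ofReal_mul (by positivity)]
            congr 1
            ring
        _ = ∫⁻ _ in Icc s t, ENNReal.ofReal (((3/2) * distBoundary D (γ s))⁻¹) :=
            (setLIntegral_const _ _).symm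
        _ ≤ Ivl := by
            rw [hIvl_def]
            apply lintegral_mono_ae
            apply (ae_restrict_iff' measurableSet_Icc).mpr
            apply Filter.Eventually.of_forall
            intro u hu
            apply ENNReal.ofReal_le_ofReal
            rw [one_div]
            have huL : u ∈ Icc (0:ℝ) L := ⟨hs.1.trans hu.1, hu.2.trans ht.2⟩
            exact inv_anti₀ (hδpos u huL) (hub u hu)
    have hcomb := le_trans hlow hIvl_le
    have : (t - s) * ((3/2) * distBoundary D (γ s))⁻¹ ≤ 1/3 :=
      (ENNReal.ofReal_le_ofReal_iff (by norm_num)).mp hcomb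
    rw [mul_inv_le_iff₀ (by positivity)] at this
    linarith
  -- choice of a time at which the geodesic meets each cube
  have hex : ∀ i : {Q : DyadicCube n // Q ∈ W ∧ (Q.set ∩ γ '' Icc 0 L).Nonempty},
      ∃ t, t ∈ Icc (0:ℝ) L ∧ γ t ∈ (i.1).set := by
    rintro ⟨Q, hQW, x, hxQ, t, ht, rfl⟩
    exact ⟨t, ht, hxQ⟩
  choose τ hτmem hτQ using hex
  set κ : {Q : DyadicCube n // Q ∈ W ∧ (Q.set ∩ γ '' Icc 0 L).Nonempty} → ℕ :=
    fun i => ⌊3 * (F (τ i)).toReal⌋₊ with hκ_def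
  set P := δ₀ * Real.exp (α * c) with hP_def
  have hPpos : 0 < P := by positivity
  set A := K * Vr * (3 * sqn) ^ n * P ^ β with hA_def
  have hKpos : 0 < K := lt_of_lt_of_le (Real.rpow_pos_of_pos two_pos _) (le_max_left _ _)
  have hVrpos : 0 ≤ Vr := ENNReal.toReal_nonneg
  have hrpos : 0 < r := Real.exp_pos _
  have hr1 : r < 1 := by
    rw [hr_def, Real.exp_lt_one_iff]
    have : 0 < α * β / 3 := by positivity
    linarith
  -- the crucial fiber estimate
  have hfiber : ∀ k : ℕ,
      ∑' i : {i : {Q : DyadicCube n // Q ∈ W ∧ (Q.set ∩ γ '' Icc 0 L).Nonempty} // κ i = k},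
        ENNReal.ofReal ((i.1.1 : DyadicCube n).len ^ β) ≤
      ENNReal.ofReal A * ENNReal.ofReal r ^ k := by
    intro k
    by_cases hne : Nonempty
        {i : {Q : DyadicCube n // Q ∈ W ∧ (Q.set ∩ γ '' Icc 0 L).Nonempty} // κ i = k}
    swap
    · haveI := not_nonempty_iff.mp hne
      rw [tsum_empty]
      exact zero_le
    obtain ⟨i₀⟩ := hne
    set t₀ := τ i₀.1 with ht₀_def
    have ht₀mem : t₀ ∈ Icc (0:ℝ) L := hτmem i₀.1
    set d₀ := distBoundary D (γ t₀) with hd₀_def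
    have hd₀pos : 0 < d₀ := hδpos t₀ ht₀mem
    -- band location facts
    have hkG : ∀ i : {i : {Q : DyadicCube n // Q ∈ W ∧ (Q.set ∩ γ '' Icc 0 L).Nonempty} //
        κ i = k}, (k:ℝ)/3 ≤ (F (τ i.1)).toReal ∧ (F (τ i.1)).toReal < ((k:ℝ)+1)/3 := by
      intro i
      have h1 : ⌊3 * (F (τ i.1)).toReal⌋₊ = k := i.2
      have h2 := Nat.floor_le (by positivity : (0:ℝ) ≤ 3 * (F (τ i.1)).toReal)
      have h3 := Nat.lt_floor_add_one (3 * (F (τ i.1)).toReal)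
      rw [h1] at h2 h3
      constructor <;> [linarith; linarith]
    -- comparability with the reference point
    have hcomp : ∀ i : {i : {Q : DyadicCube n // Q ∈ W ∧ (Q.set ∩ γ '' Icc 0 L).Nonempty} //
        κ i = k}, distBoundary D (γ (τ i.1)) ≤ (3/2) * d₀ ∧
        d₀ ≤ (3/2) * distBoundary D (γ (τ i.1)) ∧ |τ i.1 - t₀| ≤ (3/4) * d₀ := by
      intro i
      have hti := hτmem i.1
      have hi := hkG i
      have hi₀ := hkG ⟨i₀.1, i₀.2⟩
      rcases le_total (τ i.1) t₀ with hle | hle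
      · have hdiff : (F t₀).toReal - (F (τ i.1)).toReal ≤ 1/3 := by
          linarith [hi.1, hi₀.2]
        obtain ⟨hv1, hv2⟩ := hvar (τ i.1) t₀ hti ht₀mem hle hdiff
        have hb := hband (τ i.1) t₀ hti ht₀mem hle hdiff
        refine ⟨by linarith, by linarith, ?_⟩
        rw [abs_sub_comm, abs_of_nonneg (by linarith)]
        linarith
      · have hdiff : (F (τ i.1)).toReal - (F t₀).toReal ≤ 1/3 := by
          linarith [hi.2, hi₀.1]
        obtain ⟨hv1, hv2⟩ := hvar t₀ (τ i.1) ht₀mem hti hle hdiff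
        have hb := hband t₀ (τ i.1) ht₀mem hti hle hdiff
        refine ⟨by linarith, by linarith, ?_⟩
        rw [abs_of_nonneg (by linarith)]
        linarith
    -- sidelength bounds
    have hℓ : ∀ i : {i : {Q : DyadicCube n // Q ∈ W ∧ (Q.set ∩ γ '' Icc 0 L).Nonempty} //
        κ i = k}, d₀ / (9 * sqn) ≤ (i.1.1 : DyadicCube n).len ∧
        (i.1.1 : DyadicCube n).len ≤ (3/2) * d₀ := by
      intro i
      obtain ⟨hc1, hc2, _⟩ := hcomp i
      obtain ⟨hw1, hw2⟩ := hWD.comparable i.1.1 i.1.2.1 (γ (τ i.1)) (hτQ i.1)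
      constructor
      · rw [div_le_iff₀ (by positivity)]
        rw [← hsqn_def] at hw2
        nlinarith
      · linarith
    -- cubes are contained in a ball around the reference point
    have hsub : ∀ i : {i : {Q : DyadicCube n // Q ∈ W ∧ (Q.set ∩ γ '' Icc 0 L).Nonempty} //
        κ i = k}, (i.1.1 : DyadicCube n).set ⊆ closedBall (γ t₀) (3 * sqn * d₀) := by
      intro i x hx
      rw [Metric.mem_closedBall]
      have hd1 : dist x (γ (τ i.1)) ≤ sqn * (i.1.1 : DyadicCube n).len := by
        rw [hsqn_def]
        exact DyadicCube.dist_le _ hx (hτQ i.1)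
      have hd2 : dist (γ (τ i.1)) (γ t₀) ≤ |τ i.1 - t₀| := by
        have h1 := hG.lipschitz.dist_le_mul (τ i.1) (hτmem i.1) t₀ ht₀mem
        simpa [Real.dist_eq] using h1
      obtain ⟨hc1, hc2, hc3⟩ := hcomp i
      obtain ⟨_, hℓ2⟩ := hℓ i
      have hsqnd : sqn * (i.1.1 : DyadicCube n).len ≤ sqn * ((3/2) * d₀) :=
        mul_le_mul_of_nonneg_left hℓ2 (by linarith)
      calc dist x (γ t₀) ≤ dist x (γ (τ i.1)) + dist (γ (τ i.1)) (γ t₀) := dist_triangle _ _ _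
        _ ≤ sqn * ((3/2) * d₀) + (3/4) * d₀ := by linarith
        _ ≤ 3 * sqn * d₀ := by nlinarith [hd₀pos, hsqn1]
    -- volume packing
    have hvol : ∑' i : {i : {Q : DyadicCube n // Q ∈ W ∧ (Q.set ∩ γ '' Icc 0 L).Nonempty} //
        κ i = k}, ENNReal.ofReal ((i.1.1 : DyadicCube n).len ^ n) ≤
        ENNReal.ofReal ((3 * sqn * d₀) ^ n) * volume (ball (0 : EuclideanSpace ℝ (Fin n)) 1) := by
      have hdisj : Pairwise (Function.onFun Disjoint
          fun i : {i : {Q : DyadicCube n // Q ∈ W ∧ (Q.set ∩ γ '' Icc 0 L).Nonempty} //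
            κ i = k} => interior (i.1.1 : DyadicCube n).set) := by
        intro i j hij
        have hne2 : (i.1.1 : DyadicCube n) ≠ (j.1.1 : DyadicCube n) := by
          intro h
          exact hij (Subtype.ext (Subtype.ext h))
        exact Set.disjoint_iff_inter_eq_empty.mpr
          (hWD.disjoint_interiors _ i.1.2.1 _ j.1.2.1 hne2)
      calc ∑' i : {i : {Q : DyadicCube n // Q ∈ W ∧ (Q.set ∩ γ '' Icc 0 L).Nonempty} //
            κ i = k}, ENNReal.ofReal ((i.1.1 : DyadicCube n).len ^ n)
          ≤ ∑' i : {i : {Q : DyadicCube n // Q ∈ W ∧ (Q.set ∩ γ '' Icc 0 L).Nonempty} //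
            κ i = k}, volume (interior (i.1.1 : DyadicCube n).set) :=
            ENNReal.tsum_le_tsum fun i => DyadicCube.volume_le _
        _ = volume (⋃ i : {i : {Q : DyadicCube n // Q ∈ W ∧ (Q.set ∩ γ '' Icc 0 L).Nonempty} //
            κ i = k}, interior (i.1.1 : DyadicCube n).set) :=
            (measure_iUnion hdisj fun i => isOpen_interior.measurableSet).symm
        _ ≤ volume (closedBall (γ t₀) (3 * sqn * d₀)) := by
            apply measure_mono
            exact Set.iUnion_subset fun i => subset_trans interior_subset (hsub i)
        _ = ENNReal.ofReal ((3 * sqn * d₀) ^ n) *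
              volume (ball (0 : EuclideanSpace ℝ (Fin n)) 1) := by
            rw [Measure.addHaar_closedBall _ _ (by positivity)]
            congr 2
            rw [finrank_euclideanSpace_fin]
    -- pointwise bound on the summand
    have hP2 : ∀ i : {i : {Q : DyadicCube n // Q ∈ W ∧ (Q.set ∩ γ '' Icc 0 L).Nonempty} //
        κ i = k}, (i.1.1 : DyadicCube n).len ^ β ≤
        (K * d₀ ^ (β - (n:ℝ))) * (i.1.1 : DyadicCube n).len ^ n := by
      intro i
      obtain ⟨hl1, hl2⟩ := hℓ i
      set ℓ := (i.1.1 : DyadicCube n).len with hℓ_def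
      have hℓpos : 0 < ℓ := DyadicCube.len_pos _
      have hsplit : ℓ ^ β = ℓ ^ n * ℓ ^ (β - (n:ℝ)) := by
        rw [← Real.rpow_natCast ℓ n, ← Real.rpow_add hℓpos]
        congr 1
        ring
      rw [hsplit]
      rw [show (K * d₀ ^ (β - (n:ℝ))) * ℓ ^ n = ℓ ^ n * (K * d₀ ^ (β - (n:ℝ))) by ring]
      apply mul_le_mul_of_nonneg_left _ (by positivity)
      rcases le_total (n:ℝ) β with hcase | hcase
      · have he : 0 ≤ β - (n:ℝ) := by linarith
        calc ℓ ^ (β - (n:ℝ)) ≤ (2 * d₀) ^ (β - (n:ℝ)) :=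
              Real.rpow_le_rpow hℓpos.le (by linarith) he
          _ = 2 ^ (β - (n:ℝ)) * d₀ ^ (β - (n:ℝ)) := Real.mul_rpow (by norm_num) hd₀pos.le
          _ ≤ K * d₀ ^ (β - (n:ℝ)) := by
              apply mul_le_mul_of_nonneg_right _ (Real.rpow_nonneg hd₀pos.le _)
              rw [hK_def]
              exact le_max_left _ _
      · have he : β - (n:ℝ) ≤ 0 := by linarith
        have h9pos : 0 < 9 * sqn := by linarith
        calc ℓ ^ (β - (n:ℝ)) ≤ (d₀ / (9 * sqn)) ^ (β - (n:ℝ)) :=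
              Real.rpow_le_rpow_of_nonpos (by positivity) hl1 he
          _ = d₀ ^ (β - (n:ℝ)) / (9 * sqn) ^ (β - (n:ℝ)) :=
              Real.div_rpow hd₀pos.le h9pos.le _
          _ = (9 * sqn) ^ ((n:ℝ) - β) * d₀ ^ (β - (n:ℝ)) := by
              rw [div_eq_mul_inv, ← Real.rpow_neg h9pos.le]
              rw [show -(β - (n:ℝ)) = (n:ℝ) - β by ring]
              ring
          _ ≤ K * d₀ ^ (β - (n:ℝ)) := by
              apply mul_le_mul_of_nonneg_right _ (Real.rpow_nonneg hd₀pos.le _)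
              rw [hK_def]
              exact le_max_right _ _
    -- decay of d₀ in terms of the band index
    have hd₀decay : d₀ ^ β ≤ P ^ β * r ^ k := by
      have h1 : d₀ ≤ P * Real.exp (-(α * (k:ℝ)/3)) := by
        have h2 := hF5 t₀ ht₀mem
        have h3 : (k:ℝ)/3 ≤ (F t₀).toReal := (hkG ⟨i₀.1, i₀.2⟩).1
        have h4 : Real.exp (-α * (F t₀).toReal) ≤ Real.exp (-(α * (k:ℝ)/3)) := by
          apply Real.exp_le_exp.mpr
          rw [neg_mul]
          rw [show -(α * (k:ℝ)/3) = -(α * ((k:ℝ)/3)) by ring]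
          apply neg_le_neg
          exact mul_le_mul_of_nonneg_left h3 hα.le
        calc d₀ ≤ δ₀ * Real.exp (α * c) * Real.exp (-α * (F t₀).toReal) := h2
          _ ≤ P * Real.exp (-(α * (k:ℝ)/3)) := by
              rw [hP_def]
              exact mul_le_mul_of_nonneg_left h4 (by positivity)
      calc d₀ ^ β ≤ (P * Real.exp (-(α * (k:ℝ)/3))) ^ β :=
            Real.rpow_le_rpow hd₀pos.le h1 hβ.le
        _ = P ^ β * (Real.exp (-(α * (k:ℝ)/3))) ^ β :=
            Real.mul_rpow hPpos.le (Real.exp_pos _).le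
        _ = P ^ β * r ^ k := by
            congr 1
            rw [← Real.exp_mul, hr_def, ← Real.exp_nat_mul]
            congr 1
            ring
    -- put the fiber bound together
    calc ∑' i : {i : {Q : DyadicCube n // Q ∈ W ∧ (Q.set ∩ γ '' Icc 0 L).Nonempty} //
          κ i = k}, ENNReal.ofReal ((i.1.1 : DyadicCube n).len ^ β)
        ≤ ∑' i : {i : {Q : DyadicCube n // Q ∈ W ∧ (Q.set ∩ γ '' Icc 0 L).Nonempty} //
          κ i = k}, ENNReal.ofReal (K * d₀ ^ (β - (n:ℝ))) *
            ENNReal.ofReal ((i.1.1 : DyadicCube n).len ^ n) := by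
          apply ENNReal.tsum_le_tsum
          intro i
          rw [← ENNReal.ofReal_mul (by positivity)]
          exact ENNReal.ofReal_le_ofReal (hP2 i)
      _ = ENNReal.ofReal (K * d₀ ^ (β - (n:ℝ))) *
          ∑' i : {i : {Q : DyadicCube n // Q ∈ W ∧ (Q.set ∩ γ '' Icc 0 L).Nonempty} //
            κ i = k}, ENNReal.ofReal ((i.1.1 : DyadicCube n).len ^ n) := ENNReal.tsum_mul_left
      _ ≤ ENNReal.ofReal (K * d₀ ^ (β - (n:ℝ))) *
          (ENNReal.ofReal ((3 * sqn * d₀) ^ n) *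
            volume (ball (0 : EuclideanSpace ℝ (Fin n)) 1)) := mul_le_mul_right hvol _
      _ = ENNReal.ofReal (K * d₀ ^ (β - (n:ℝ)) * ((3 * sqn * d₀) ^ n * Vr)) := by
          have hball : volume (ball (0 : EuclideanSpace ℝ (Fin n)) 1) = ENNReal.ofReal Vr :=
            (ENNReal.ofReal_toReal (measure_ball_lt_top).ne).symm
          rw [hball, ← ENNReal.ofReal_mul (by positivity), ← ENNReal.ofReal_mul (by positivity)]
      _ ≤ ENNReal.ofReal A * ENNReal.ofReal r ^ k := by
          rw [← ENNReal.ofReal_pow hrpos.le, ← ENNReal.ofReal_mul (by rw [hA_def]; positivity)]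
          apply ENNReal.ofReal_le_ofReal
          have hdd : d₀ ^ (β - (n:ℝ)) * d₀ ^ n = d₀ ^ β := by
            rw [← Real.rpow_natCast d₀ n, ← Real.rpow_add hd₀pos]
            congr 1
            ring
          calc K * d₀ ^ (β - (n:ℝ)) * ((3 * sqn * d₀) ^ n * Vr)
              = K * Vr * (3 * sqn) ^ n * (d₀ ^ (β - (n:ℝ)) * d₀ ^ n) := by
                rw [mul_pow]
                ring
            _ = K * Vr * (3 * sqn) ^ n * d₀ ^ β := by rw [hdd]
            _ ≤ K * Vr * (3 * sqn) ^ n * (P ^ β * r ^ k) := by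
                apply mul_le_mul_of_nonneg_left hd₀decay
                positivity
            _ = A * r ^ k := by rw [hA_def]; ring
  -- sum over the fibers
  have htotal := tsum_le_of_fiber_le
    (fun i : {Q : DyadicCube n // Q ∈ W ∧ (Q.set ∩ γ '' Icc 0 L).Nonempty} =>
      ENNReal.ofReal ((i : DyadicCube n).len ^ β)) κ (ENNReal.ofReal A) (ENNReal.ofReal r) hfiber
  refine le_trans htotal ?_
  -- final arithmetic
  have h1r : 0 < 1 - r := by linarith
  have hgeo : (1 - ENNReal.ofReal r)⁻¹ = ENNReal.ofReal ((1 - r)⁻¹) := by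
    rw [← ENNReal.ofReal_one, ← ENNReal.ofReal_sub _ hrpos.le, ENNReal.ofReal_inv_of_pos h1r]
  rw [hgeo, ← ENNReal.ofReal_mul (by rw [hA_def]; positivity)]
  apply ENNReal.ofReal_le_ofReal
  have hPβ : P ^ β = Real.exp (α * β * c) * δ₀ ^ β := by
    rw [hP_def, Real.mul_rpow hδ0.le (Real.exp_pos _).le, ← Real.exp_mul]
    rw [show α * c * β = α * β * c by ring]
    ring
  calc A * (1 - r)⁻¹ = (K * Vr * (3 * sqn) ^ n * Real.exp (α * β * c) * (1 - r)⁻¹) * δ₀ ^ β := by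
        rw [hA_def, hPβ]
        ring
    _ ≤ max 1 (K * Vr * (3 * sqn) ^ n * Real.exp (α * β * c) * (1 - r)⁻¹) * δ₀ ^ β := by
        apply mul_le_mul_of_nonneg_right (le_max_right _ _) (Real.rpow_nonneg hδ0.le _)
end
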